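/- arXiv:1709.00617 — 3 statements merged into one kernel-verified Lean document; each statement's English description precedes it below -/
import Mathlib

section
/- Let t ≥ 2 be an integer. The largest size of a (t, t+1)-core partition with distinct parts is ⌊t(t+1)/6⌋. (A (t, t+1)-core partition with distinct parts of this size exists, and every such partition has size at most this value.) -/
/-- A partition: a finite weakly decreasing list of positive integers. -/
structure Partn where
  parts : List ℕ
  pos : ∀ p ∈ parts, 0 < p
  sorted : parts.Pairwise (· ≥ ·)

namespace Partn

/-- The size of a partition: the sum of its parts. -/
def size (l : Partn) : ℕ := l.parts.sum

/-- The number of rows `k` (0-indexed) with `λ_k ≥ j` (the length of column `j`). -/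
def colLen (l : Partn) (j : ℕ) : ℕ := (l.parts.filter (fun p => j ≤ p)).length

/-- The hook length of the box in row `i` (0-indexed) and column `j` (1-indexed):
`λ_i − j + #{k : λ_k ≥ j} − i + 1` (with 1-indexed rows). -/
def hook (l : Partn) (i j : ℕ) : ℕ :=
  (l.parts.getD i 0 - j) + (l.colLen j - (i + 1)) + 1

/-- A partition is a `t`-core if none of its hook lengths is divisible by `t`. -/
def IsCore (t : ℕ) (l : Partn) : Prop :=
  ∀ i j : ℕ, i < l.parts.length → 1 ≤ j → j ≤ l.parts.getD i 0 → ¬ (t ∣ l.hook i j)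

/-- A partition has distinct parts if its parts are strictly decreasing. -/
def DistinctParts (l : Partn) : Prop := l.parts.Pairwise (· > ·)

/-- The β-set of a partition: `{λ_i + ℓ − i : 1 ≤ i ≤ ℓ}` (1-indexed). -/
def betaSet (l : Partn) : Finset ℕ :=
  (Finset.range l.parts.length).image
    (fun i => l.parts.getD i 0 + (l.parts.length - 1 - i))

/-- `nFn t i l` is the number of elements of the β-set of `l` congruent to `i` mod `t`. -/
def nFn (t i : ℕ) (l : Partn) : ℕ :=
  (l.betaSet.filter (fun x => x % t = i)).card

end Partn


lemma list_sum_eq (L : List ℕ) : L.sum = ∑ k ∈ Finset.range L.length, L.getD k 0 := by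
  induction L with
  | nil => simp
  | cons a L ih =>
    rw [List.sum_cons, List.length_cons, Finset.sum_range_succ']
    simp [ih, Nat.add_comm]

lemma map_range_sum (f : ℕ → ℕ) (n : ℕ) :
    ((List.range n).map f).sum = ∑ k ∈ Finset.range n, f k := by
  induction n with
  | zero => simp
  | succ n ih => rw [List.range_succ, List.map_append, List.sum_append, Finset.sum_range_succ]; simp [ih]

lemma sum2 (a : ℕ) : ∀ n : ℕ, n ≤ a + 1 →
    2 * (∑ k ∈ Finset.range n, (a - k)) = n * (2 * a + 1 - n) := by
  intro n
  induction n with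
  | zero => simp
  | succ n ih =>
    intro h
    rw [Finset.sum_range_succ, Nat.mul_add, ih (by omega)]
    have hu1 : 2*a+1-n = (2*a+1-(n+1)) + 1 := by omega
    have hu2 : 2*(a-n) = (2*a+1-(n+1)) - n := by omega
    have hn : n ≤ 2*a+1-(n+1) := by omega
    set u := 2*a+1-(n+1) with hu
    rw [hu1, hu2, Nat.mul_succ, Nat.succ_mul]
    generalize n*u = P
    omega

lemma filt_len {j : ℕ} (hj : 1 ≤ j) : ∀ (L : List ℕ), L.Pairwise (· ≥ ·) → ∀ i : ℕ,
    (i < (L.filter (fun p => j ≤ p)).length ↔ i < L.length ∧ j ≤ L.getD i 0) := by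
  intro L
  induction L with
  | nil => simp
  | cons a L ih =>
    intro hs i
    rw [List.pairwise_cons] at hs
    obtain ⟨ha, hs⟩ := hs
    by_cases hja : j ≤ a
    · rw [List.filter_cons_of_pos (by simpa using hja)]
      cases i with
      | zero => simpa using hja
      | succ i =>
        simp only [List.length_cons, Nat.succ_lt_succ_iff, List.getD_cons_succ]
        exact ih hs i
    · rw [List.filter_cons_of_neg (by simpa using hja)]
      have hnil : L.filter (fun p => j ≤ p) = [] := by
        rw [List.filter_eq_nil_iff]
        intro b hb
        simp only [decide_eq_true_eq]
        exact fun hjb => hja (le_trans hjb (ha b hb))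
      rw [hnil]
      simp only [List.length_nil]
      constructor
      · omega
      · rintro ⟨hi, hji⟩
        cases i with
        | zero => simp only [List.getD_cons_zero] at hji; omega
        | succ i =>
          simp only [List.getD_cons_succ] at hji
          rcases Nat.lt_or_ge i L.length with h | h
          · have := ha _ (List.getElem_mem h)
            rw [List.getD_eq_getElem L 0 h] at hji
            omega
          · rw [List.getD_eq_default L 0 h] at hji; omega

namespace Partn

lemma lt_colLen_iff (l : Partn) {j : ℕ} (hj : 1 ≤ j) (i : ℕ) :
    i < l.colLen j ↔ i < l.parts.length ∧ j ≤ l.parts.getD i 0 :=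
  filt_len hj l.parts l.sorted i

lemma colLen_le (l : Partn) (j : ℕ) : l.colLen j ≤ l.parts.length :=
  List.length_filter_le _ _

lemma getD_pos (l : Partn) {i : ℕ} (hi : i < l.parts.length) : 1 ≤ l.parts.getD i 0 := by
  rw [List.getD_eq_getElem l.parts 0 hi]
  exact l.pos _ (List.getElem_mem hi)

lemma colLen_mono (l : Partn) {j1 j2 : ℕ} (h1 : 1 ≤ j1) (h12 : j1 ≤ j2) :
    l.colLen j2 ≤ l.colLen j1 := by
  by_contra h
  push_neg at h
  have h2 : (1:ℕ) ≤ j2 := le_trans h1 h12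
  have := (l.lt_colLen_iff h2 (l.colLen j1)).mp h
  have := (l.lt_colLen_iff h1 (l.colLen j1)).mpr ⟨this.1, le_trans h12 this.2⟩
  omega

lemma colLen_one (l : Partn) : l.colLen 1 = l.parts.length := by
  have h1 := l.colLen_le 1
  rcases Nat.eq_zero_or_pos l.parts.length with h | h
  · omega
  · have := (l.lt_colLen_iff (le_refl 1) (l.parts.length - 1)).mpr
      ⟨by omega, l.getD_pos (by omega)⟩
    omega

/-- strict decrease with gaps -/
lemma getD_strict (l : Partn) (hd : l.DistinctParts) :
    ∀ d i : ℕ, i + d < l.parts.length → l.parts.getD (i + d) 0 + d ≤ l.parts.getD i 0 := by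
  have hp := List.pairwise_iff_getElem.mp hd
  intro d
  induction d with
  | zero => simp
  | succ d ih =>
    intro i h
    have h1 : l.parts.getD (i + d) 0 + d ≤ l.parts.getD i 0 := ih i (by omega)
    have h2 : l.parts[i + d + 1] < l.parts[i + d] :=
      hp (i + d) (i + d + 1) (by omega) (by omega) (by omega)
    rw [List.getD_eq_getElem l.parts 0 (by omega : i + d < l.parts.length)] at h1
    rw [show i + (d+1) = i + d + 1 by omega, List.getD_eq_getElem l.parts 0 (by omega)]
    omega

end Partn

namespace Partn

/-- If `m` is below `λ₀+ℓ-1` and not in the β-set, then some hook in row 0 equals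
`(λ₀+ℓ-1) - m`. -/
lemma find_j (l : Partn) (hd : l.DistinctParts) (hne : 0 < l.parts.length) {m : ℕ}
    (hm : m + 2 ≤ l.parts.getD 0 0 + l.parts.length)
    (hnB : ∀ i, i < l.parts.length →
      l.parts.getD i 0 + (l.parts.length - 1 - i) ≠ m) :
    ∃ j, 1 ≤ j ∧ j ≤ l.parts.getD 0 0 ∧
      l.hook 0 j + m = l.parts.getD 0 0 + (l.parts.length - 1) := by
  set n := l.parts.length with hn
  set lam0 := l.parts.getD 0 0 with hlam0
  have hlam0pos : 1 ≤ lam0 := l.getD_pos hne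
  have hc1 : l.colLen 1 = n := l.colLen_one
  -- colLen lam0 = 1
  have hclam0 : l.colLen lam0 = 1 := by
    have hpos : 0 < l.colLen lam0 :=
      (l.lt_colLen_iff hlam0pos 0).mpr ⟨hne, le_refl _⟩
    by_contra h
    have h2 : 1 < l.colLen lam0 := by omega
    have := (l.lt_colLen_iff hlam0pos 1).mp h2
    have hstr := l.getD_strict hd 1 0 (by omega)
    simp only [Nat.zero_add] at hstr
    omega
  -- skipped values are in the β-set
  have skipped : ∀ j, 1 ≤ j → j < lam0 →
      (j - 1) + (n - l.colLen j) < m → m < j + (n - l.colLen (j+1)) → False := by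
    intro j hj1 hjlt hfj hfj1
    have hcj : l.colLen j ≤ n := l.colLen_le j
    have hcj1 : l.colLen (j+1) ≤ n := l.colLen_le (j+1)
    have hmono : l.colLen (j+1) ≤ l.colLen j := l.colLen_mono hj1 (by omega)
    set s := m - ((j-1) + (n - l.colLen j)) with hs
    have hs1 : 1 ≤ s := by omega
    have hs2 : s ≤ l.colLen j - l.colLen (j+1) := by omega
    set i := l.colLen j - s with hi
    have hilt : i < l.colLen j := by omega
    have hige : l.colLen (j+1) ≤ i := by omega
    have h1 := (l.lt_colLen_iff hj1 i).mp hilt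
    have h2 : ¬ (i < l.colLen (j+1)) := by omega
    rw [l.lt_colLen_iff (by omega) i] at h2
    push_neg at h2
    have hlij : l.parts.getD i 0 = j := by
      have := h2 h1.1
      omega
    exact hnB i h1.1 (by rw [hlij]; omega)
  -- upward search loop
  have loop : ∀ fuel j, 1 ≤ j → j ≤ lam0 → lam0 - j ≤ fuel →
      (j - 1) + (n - l.colLen j) ≤ m →
      ∃ j', 1 ≤ j' ∧ j' ≤ lam0 ∧ (j' - 1) + (n - l.colLen j') = m := by
    intro fuel
    induction fuel with
    | zero =>
      intro j hj1 hjle hfuel hfm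
      have hj : j = lam0 := by omega
      refine ⟨j, hj1, hjle, ?_⟩
      subst hj
      rw [hclam0] at hfm ⊢
      omega
    | succ fuel ih =>
      intro j hj1 hjle hfuel hfm
      rcases eq_or_lt_of_le hfm with he | hlt
      · exact ⟨j, hj1, hjle, he⟩
      · have hjlam0 : j < lam0 := by
          rcases eq_or_lt_of_le hjle with he | h
          · exfalso; rw [he, hclam0] at hlt; omega
          · exact h
        by_cases hnext : (j + 1 - 1) + (n - l.colLen (j+1)) ≤ m
        · exact ih (j+1) (by omega) (by omega) (by omega) hnext
        · exfalso
          push_neg at hnext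
          exact skipped j hj1 hjlam0 hlt (by omega)
  have hstart : (1 - 1) + (n - l.colLen 1) ≤ m := by rw [hc1]; omega
  obtain ⟨j, hj1, hjle, hfj⟩ := loop lam0 1 (le_refl 1) hlam0pos (by omega) hstart
  refine ⟨j, hj1, hjle, ?_⟩
  have hcjpos : 0 < l.colLen j := (l.lt_colLen_iff hj1 0).mpr ⟨hne, hjle⟩
  have hcjle : l.colLen j ≤ n := l.colLen_le j
  show (l.parts.getD 0 0 - j) + (l.colLen j - (0 + 1)) + 1 + m = lam0 + (n - 1)
  rw [← hlam0]
  omega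

end Partn

namespace Partn

lemma consec_nonneg (d : ℤ) : 0 ≤ d * (d + 1) := by
  have h := sq_nonneg (2*d + 1)
  nlinarith

lemma arith_bound (t n S : ℕ) (h2n : 2*n ≤ t)
    (hS : 2 * S ≤ n * (2*(t-n) + 1 - n)) : 6 * S ≤ t * (t+1) := by
  have hu : (2*(t-n) + 1 - n) + 3*n = 2*t + 1 := by omega
  have h' : 2 * S + 3*(n*n) ≤ n * (2*t+1) := by
    rw [← hu, Nat.mul_add]
    have : n * (3*n) = 3*(n*n) := by ring
    omega
  zify at h' ⊢
  nlinarith [consec_nonneg ((t:ℤ) - 3*n)]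

/-- Any (t,t+1)-core with distinct parts satisfies λ₀ + ℓ ≤ t. -/
lemma small_profile (t : ℕ) (ht : 2 ≤ t) (mu : Partn)
    (h1 : mu.IsCore t) (h2 : mu.IsCore (t+1)) (h3 : mu.DistinctParts)
    (hne : 0 < mu.parts.length) :
    mu.parts.getD 0 0 + mu.parts.length ≤ t := by
  set n := mu.parts.length with hn
  set lam0 := mu.parts.getD 0 0 with hlam0
  by_contra hcon
  push_neg at hcon
  -- g0 := lam0 + (n-1) ≥ t
  by_cases hB : ∃ i, i < n ∧ mu.parts.getD i 0 + (n - 1 - i) = lam0 + (n-1) - t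
  · -- m ∈ β-set; then m ≥ 1 and m-1 ∉ β-set, find hook = t+1
    obtain ⟨i0, hi0, hgi0⟩ := hB
    have hpos : 1 ≤ mu.parts.getD i0 0 := mu.getD_pos hi0
    have hm1 : 1 ≤ lam0 + (n-1) - t := by omega
    have hnB : ∀ i, i < n → mu.parts.getD i 0 + (n - 1 - i) ≠ lam0 + (n-1) - t - 1 := by
      intro k hk hgk
      rcases Nat.lt_trichotomy k i0 with h | h | h
      · have := mu.getD_strict h3 (i0 - k) k (by omega)
        rw [show k + (i0 - k) = i0 by omega] at this
        omega
      · subst h; omega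
      · have := mu.getD_strict h3 (k - i0) i0 (by omega)
        rw [show i0 + (k - i0) = k by omega] at this
        omega
    obtain ⟨j, hj1, hjle, hook_eq⟩ := mu.find_j h3 hne
      (by omega : (lam0 + (n-1) - t - 1) + 2 ≤ mu.parts.getD 0 0 + mu.parts.length) hnB
    have hooke : mu.hook 0 j = t + 1 := by omega
    exact h2 0 j hne hj1 hjle (hooke ▸ dvd_refl (t+1))
  · -- m ∉ β-set, find hook = t
    push_neg at hB
    obtain ⟨j, hj1, hjle, hook_eq⟩ := mu.find_j h3 hne
      (by omega : (lam0 + (n-1) - t) + 2 ≤ mu.parts.getD 0 0 + mu.parts.length)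
      (fun i hi => hB i hi)
    have hooke : mu.hook 0 j = t := by omega
    exact h1 0 j hne hj1 hjle (hooke ▸ dvd_refl t)

lemma upper_bound (t : ℕ) (ht : 2 ≤ t) (mu : Partn)
    (h1 : mu.IsCore t) (h2 : mu.IsCore (t+1)) (h3 : mu.DistinctParts) :
    mu.size ≤ t * (t+1) / 6 := by
  set n := mu.parts.length with hn
  rcases Nat.eq_zero_or_pos n with h0 | hne
  · have : mu.parts = [] := List.length_eq_zero_iff.mp h0
    simp [size, this]
  · set lam0 := mu.parts.getD 0 0 with hlam0
    have hA : lam0 + n ≤ t := mu.small_profile t ht h1 h2 h3 hne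
    have hlast : 1 ≤ mu.parts.getD (n-1) 0 := mu.getD_pos (by omega)
    have hln : n ≤ lam0 := by
      have := mu.getD_strict h3 (n-1) 0 (by omega)
      simp only [Nat.zero_add] at this
      omega
    have hterm : ∀ k, k < n → mu.parts.getD k 0 ≤ (t - n) - k := by
      intro k hk
      have := mu.getD_strict h3 k 0 (by omega)
      simp only [Nat.zero_add] at this
      omega
    have hsum : mu.size ≤ ∑ k ∈ Finset.range n, ((t-n) - k) := by
      rw [size, list_sum_eq, hn]
      exact Finset.sum_le_sum (fun k hk => hterm k (Finset.mem_range.mp hk))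
    have h2n : 2*n ≤ t := by omega
    have hS2 : 2 * (∑ k ∈ Finset.range n, ((t-n) - k)) = n * (2*(t-n) + 1 - n) :=
      sum2 (t-n) n (by omega)
    have h6 : 6 * mu.size ≤ t * (t+1) :=
      arith_bound t n mu.size h2n (by omega)
    rw [Nat.le_div_iff_mul_le (by norm_num : 0 < 6)]
    omega

end Partn

namespace Partn

lemma exists_part (t : ℕ) (ht : 2 ≤ t) :
    ∃ lam : Partn, (lam.IsCore t ∧ lam.IsCore (t + 1) ∧ lam.DistinctParts) ∧
      lam.size = t * (t + 1) / 6 := by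
  set l := (t+1)/3 with hl
  set a := t - l with ha
  have hl1 : 1 ≤ l := by omega
  have h2l : 2*l ≤ t := by omega
  have hla : l ≤ a := by omega
  set L := (List.range l).map (fun k => a - k) with hL
  have hlen : L.length = l := by simp [hL]
  have hget : ∀ i, i < l → L.getD i 0 = a - i := by
    intro i hi
    rw [List.getD_eq_getElem L 0 (by omega)]
    simp [hL]
  have hpos : ∀ p ∈ L, 0 < p := by
    intro p hp
    rw [hL, List.mem_map] at hp
    obtain ⟨k, hk, rfl⟩ := hp
    rw [List.mem_range] at hk
    omega
  have hpair : ∀ (R : ℕ → ℕ → Prop), (∀ i j, i < j → j < l → R (a-i) (a-j)) → L.Pairwise R := by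
    intro R hR
    rw [List.pairwise_iff_getElem]
    intro i j hi hj hij
    rw [hlen] at hi hj
    simp only [hL, List.getElem_map, List.getElem_range]
    exact hR i j hij hj
  have hsorted : L.Pairwise (· ≥ ·) := hpair _ (fun i j hij hj => by omega)
  set lam : Partn := ⟨L, hpos, hsorted⟩ with hlam
  have hdist : lam.DistinctParts := hpair _ (fun i j hij hj => by omega)
  have hcol : ∀ j, lam.colLen j ≤ l := by
    intro j
    have := lam.colLen_le j
    simpa [hlam, hlen] using this
  have hhook : ∀ i j, i < l → 1 ≤ j → j ≤ lam.parts.getD i 0 → lam.hook i j ≤ t - 1 ∧ 1 ≤ lam.hook i j := by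
    intro i j hi hj1 hjle
    have hgi : lam.parts.getD i 0 = a - i := hget i hi
    have hc := hcol j
    show (lam.parts.getD i 0 - j) + (lam.colLen j - (i + 1)) + 1 ≤ t - 1 ∧
      1 ≤ (lam.parts.getD i 0 - j) + (lam.colLen j - (i + 1)) + 1
    omega
  have hcore : ∀ s, t ≤ s → lam.IsCore s := by
    intro s hs i j hi hj1 hjle hdvd
    have hi' : i < l := by simpa [hlam, hlen] using hi
    obtain ⟨hub, hlb⟩ := hhook i j hi' hj1 hjle
    have := Nat.le_of_dvd (by omega) hdvd
    omega
  refine ⟨lam, ⟨hcore t (le_refl t), hcore (t+1) (by omega), hdist⟩, ?_⟩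
  -- size computation
  have hsz : 2 * lam.size = l * (2*a + 1 - l) := by
    show 2 * L.sum = _
    rw [hL, map_range_sum, sum2 a l (by omega)]
  have hq : t = 3*(t/3) + t % 3 := by omega
  set q := t/3 with hqdef
  have hrlt : t % 3 = 0 ∨ t % 3 = 1 ∨ t % 3 = 2 := by omega
  show lam.size = t * (t+1) / 6
  rcases hrlt with hr | hr | hr
  · have hlq : l = q := by omega
    have hu : 2*a + 1 - q = 3*q + 1 := by omega
    rw [hlq, hu] at hsz
    have key : (3*q) * ((3*q) + 1) = 3 * (q * (3*q+1)) := by ring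
    have ht' : t * (t+1) = 3 * (q * (3*q+1)) := by rw [show t = 3*q by omega]; exact key
    generalize hP : q * (3*q+1) = P at hsz ht'
    omega
  · have hlq : l = q := by omega
    have hu : 2*a + 1 - q = 3*q + 3 := by omega
    rw [hlq, hu] at hsz
    have ht' : t * (t+1) = 3 * (q * (3*q+3)) + 2 := by
      rw [show t = 3*q+1 by omega]; ring
    generalize hP : q * (3*q+3) = P at hsz ht'
    omega
  · have hlq : l = q + 1 := by omega
    have hu : 2*a + 1 - (q+1) = 3*q + 2 := by omega
    rw [hlq, hu] at hsz
    have ht' : t * (t+1) = 3 * ((q+1) * (3*q+2)) := by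
      rw [show t = 3*q+2 by omega]; ring
    generalize hP : (q+1) * (3*q+2) = P at hsz ht'
    omega

end Partn

/-- The largest size of a `(t, t+1)`-core partition with distinct parts is `⌊t(t+1)/6⌋`. -/
theorem largest_size_t_t_add_one (t : ℕ) (ht : 2 ≤ t) :
    (∃ lam : Partn, (lam.IsCore t ∧ lam.IsCore (t + 1) ∧ lam.DistinctParts) ∧
        lam.size = t * (t + 1) / 6) ∧
      ∀ mu : Partn, (mu.IsCore t ∧ mu.IsCore (t + 1) ∧ mu.DistinctParts) →
        mu.size ≤ t * (t + 1) / 6 := by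
  constructor
  · exact Partn.exists_part t ht
  · rintro mu ⟨h1, h2, h3⟩
    exact Partn.upper_bound t ht mu h1 h2 h3
end

section
/- Let t ≥ 2 and m ≥ 2 be integers. The number of (t, mt−1)-core partitions with distinct parts whose size is maximal among all (t, mt−1)-core partitions with distinct parts is at most 2. -/
open Finset

/-! ### list index lemmas -/

lemma listSum (l : List ℕ) : l.sum = ∑ i ∈ Finset.range l.length, l.getD i 0 := by
  induction l with
  | nil => simp
  | cons a l ih =>
    rw [List.sum_cons, List.length_cons, Finset.sum_range_succ']
    simp [ih, Nat.add_comm]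

lemma listFilterLen (l : List ℕ) (f : ℕ → Bool) :
    (l.filter f).length = ((Finset.range l.length).filter (fun i => f (l.getD i 0) = true)).card := by
  induction l with
  | nil => simp
  | cons a l ih =>
    rw [List.filter_cons, List.length_cons]
    rw [Finset.card_filter, Finset.sum_range_succ', ← Finset.card_filter]
    simp only [List.getD_cons_succ, List.getD_cons_zero]
    by_cases h : f a <;> simp [h, ih]

namespace Partn

def len (l : Partn) : ℕ := l.parts.length
def pt (l : Partn) (i : ℕ) : ℕ := l.parts.getD i 0
def bt (l : Partn) (i : ℕ) : ℕ := l.pt i + (l.len - 1 - i)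

variable (l : Partn)

lemma pt_pos {i : ℕ} (hi : i < l.len) : 1 ≤ l.pt i := by
  rw [pt, List.getD_eq_getElem l.parts 0 hi]
  exact l.pos _ (List.getElem_mem _)

lemma pt_anti {i j : ℕ} (hij : i ≤ j) (hj : j < l.len) : l.pt j ≤ l.pt i := by
  rcases eq_or_lt_of_le hij with rfl | hij
  · exact le_refl _
  · rw [pt, pt, List.getD_eq_getElem l.parts 0 hj, List.getD_eq_getElem l.parts 0 (lt_trans hij hj)]
    exact List.Pairwise.rel_get_of_lt l.sorted (by exact hij)

lemma pt_strict (hd : l.DistinctParts) {i j : ℕ} (hij : i < j) (hj : j < l.len) :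
    l.pt j < l.pt i := by
  rw [pt, pt, List.getD_eq_getElem l.parts 0 hj, List.getD_eq_getElem l.parts 0 (lt_trans hij hj)]
  exact List.Pairwise.rel_get_of_lt hd (by exact hij)

lemma bt_lt {i j : ℕ} (hij : i < j) (hj : j < l.len) : l.bt j < l.bt i := by
  have h1 := l.pt_anti (le_of_lt hij) hj
  have : j ≤ l.len - 1 := by omega
  rw [bt, bt]; omega

lemma bt_le {i j : ℕ} (hij : i ≤ j) (hj : j < l.len) : l.bt j ≤ l.bt i := by
  rcases eq_or_lt_of_le hij with rfl | h
  · exact le_refl _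
  · exact le_of_lt (l.bt_lt h hj)

lemma mem_betaSet {x : ℕ} : x ∈ l.betaSet ↔ ∃ i, i < l.len ∧ l.bt i = x := by
  simp [betaSet, bt, pt, len, Finset.mem_image]

lemma bt_mem {i : ℕ} (hi : i < l.len) : l.bt i ∈ l.betaSet :=
  l.mem_betaSet.2 ⟨i, hi, rfl⟩

lemma betaSet_eq : l.betaSet = (Finset.range l.len).image l.bt := rfl

lemma bt_injOn : Set.InjOn l.bt (Finset.range l.len) := by
  intro i hi j hj hij
  simp only [coe_range, Set.mem_Iio] at hi hj
  by_contra h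
  rcases Nat.lt_or_ge i j with h' | h'
  · exact absurd hij (Nat.ne_of_lt (l.bt_lt h' hj)).symm
  · have h' : j < i := by omega
    exact absurd hij (Nat.ne_of_lt (l.bt_lt h' hi))

lemma card_betaSet : l.betaSet.card = l.len := by
  rw [betaSet_eq, Finset.card_image_of_injOn l.bt_injOn, Finset.card_range]

lemma sum_betaSet : 2 * (∑ x ∈ l.betaSet, x) = 2 * l.size + l.len * (l.len - 1) := by
  rw [betaSet_eq, Finset.sum_image l.bt_injOn]
  have h1 : ∑ i ∈ range l.len, l.bt i
      = (∑ i ∈ range l.len, l.pt i) + ∑ i ∈ range l.len, (l.len - 1 - i) := by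
    rw [← Finset.sum_add_distrib]; rfl
  have h2 : (∑ i ∈ range l.len, l.pt i) = l.size := (listSum l.parts).symm
  have h3 : ∑ i ∈ range l.len, (l.len - 1 - i) = ∑ i ∈ range l.len, i := by
    rcases Nat.eq_zero_or_pos l.len with h | h
    · simp [h]
    · have := Finset.sum_range_reflect (fun i => i) l.len
      calc ∑ i ∈ range l.len, (l.len - 1 - i) = ∑ i ∈ range l.len, (l.len - 1 - (i + 0)) := by
            simp
        _ = ∑ i ∈ range l.len, i := by rw [← this]; apply Finset.sum_congr rfl; intro i hi; omega
  have h4 : (∑ i ∈ range l.len, i) * 2 = l.len * (l.len - 1) := Finset.sum_range_id_mul_two l.len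
  rw [h1, h2, h3]
  omega

end Partn

namespace Partn

variable (l : Partn)

lemma bt_inj {i j : ℕ} (hi : i < l.len) (hj : j < l.len) (h : l.bt i = l.bt j) : i = j := by
  by_contra hne
  rcases lt_or_gt_of_ne hne with h' | h'
  · have := l.bt_lt h' hj; omega
  · have := l.bt_lt h' hi; omega

lemma colLen_card (j : ℕ) :
    l.colLen j = ((Finset.range l.len).filter (fun i => j ≤ l.pt i)).card := by
  rw [colLen, listFilterLen]
  congr 1
  apply Finset.filter_congr
  intro i _
  simp [pt]

lemma colLen_le_len (j : ℕ) : l.colLen j ≤ l.len := by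
  rw [colLen_card]
  exact le_trans (Finset.card_filter_le _ _) (by rw [Finset.card_range])

lemma colLen_lower {i j : ℕ} (hi : i < l.len) (hj : j ≤ l.pt i) : i + 1 ≤ l.colLen j := by
  rw [colLen_card]
  have hsub : Finset.range (i + 1) ⊆ (Finset.range l.len).filter (fun k => j ≤ l.pt k) := by
    intro k hk
    rw [Finset.mem_range] at hk
    rw [Finset.mem_filter, Finset.mem_range]
    have hkl : k < l.len := by omega
    exact ⟨hkl, le_trans hj (l.pt_anti (by omega) hi)⟩
  calc i + 1 = (Finset.range (i + 1)).card := (Finset.card_range _).symm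
    _ ≤ _ := Finset.card_le_card hsub

lemma colLen_upper {k j : ℕ} (hk : k < l.len) (hj : l.pt k < j) : l.colLen j ≤ k := by
  rw [colLen_card]
  have hsub : (Finset.range l.len).filter (fun i => j ≤ l.pt i) ⊆ Finset.range k := by
    intro i hi
    rw [Finset.mem_filter, Finset.mem_range] at hi
    rw [Finset.mem_range]
    by_contra h
    have : l.pt i ≤ l.pt k := l.pt_anti (by omega) hi.1
    omega
  exact le_trans (Finset.card_le_card hsub) (by rw [Finset.card_range])

lemma colLen_anti {j j' : ℕ} (h : j ≤ j') : l.colLen j' ≤ l.colLen j := by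
  rw [colLen_card, colLen_card]
  apply Finset.card_le_card
  intro i hi
  rw [Finset.mem_filter] at hi ⊢
  exact ⟨hi.1, le_trans h hi.2⟩

/-- The complement code of column `j`. -/
def cfun (l : Partn) (j : ℕ) : ℕ := l.len - 1 + j - l.colLen j

lemma cfun_notmem {j : ℕ} (hj : 1 ≤ j) : l.cfun j ∉ l.betaSet := by
  intro hmem
  obtain ⟨k, hk, hbk⟩ := l.mem_betaSet.1 hmem
  have hle := l.colLen_le_len j
  have hbtk : l.bt k = l.pt k + (l.len - 1 - k) := rfl
  rcases le_or_gt j (l.pt k) with h | h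
  · have h1 := l.colLen_lower hk h
    rw [cfun] at hbk
    omega
  · have h1 := l.colLen_upper hk h
    rw [cfun] at hbk
    omega

lemma cfun_lt {j j' : ℕ} (hj : 1 ≤ j) (h : j < j') : l.cfun j < l.cfun j' := by
  have h1 := l.colLen_anti (j := j) (j' := j') (le_of_lt h)
  have h2 := l.colLen_le_len j
  have h3 := l.colLen_le_len j'
  rw [cfun, cfun]
  omega

lemma hook_add_cfun {i j : ℕ} (hi : i < l.len) (hj1 : 1 ≤ j) (hj2 : j ≤ l.pt i) :
    l.hook i j + l.cfun j = l.bt i ∧ 1 ≤ l.hook i j := by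
  have h1 := l.colLen_lower hi hj2
  have h2 := l.colLen_le_len j
  have h3 : l.bt i = l.pt i + (l.len - 1 - i) := rfl
  constructor
  · show l.pt i - j + (l.colLen j - (i+1)) + 1 + (l.len - 1 + j - l.colLen j) = l.bt i
    omega
  · show 1 ≤ l.pt i - j + (l.colLen j - (i+1)) + 1
    omega

lemma isCore_iff {t : ℕ} (ht : 1 ≤ t) :
    l.IsCore t ↔ ∀ x ∈ l.betaSet, t ≤ x → x - t ∈ l.betaSet := by
  constructor
  · intro hcore x hx htx
    by_contra hc
    obtain ⟨i, hi, rfl⟩ := l.mem_betaSet.1 hx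
    set F : Finset ℕ := (l.betaSet.filter (fun y => y < l.bt i)).image (fun y => l.bt i - y) with hF
    set S : Finset ℕ := (Finset.Icc 1 (l.bt i)) \ F with hS
    set im : Finset ℕ := (Finset.Icc 1 (l.pt i)).image (fun j => l.bt i - l.cfun j) with him
    have hcfun_lt : ∀ j ∈ Finset.Icc 1 (l.pt i), l.cfun j < l.bt i := by
      intro j hj
      rw [Finset.mem_Icc] at hj
      obtain ⟨heq, hpos⟩ := l.hook_add_cfun hi hj.1 hj.2
      omega
    have him_sub : im ⊆ S := by
      intro v hv
      rw [him, Finset.mem_image] at hv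
      obtain ⟨j, hj, rfl⟩ := hv
      have hjj := hj
      rw [Finset.mem_Icc] at hjj
      obtain ⟨heq, hpos⟩ := l.hook_add_cfun hi hjj.1 hjj.2
      rw [hS, Finset.mem_sdiff]
      constructor
      · rw [Finset.mem_Icc]; omega
      · rw [hF, Finset.mem_image]
        rintro ⟨y, hy, hyeq⟩
        rw [Finset.mem_filter] at hy
        have hyeq' : l.bt i - y = l.bt i - l.cfun j := hyeq
        have hy2 : y < l.bt i := hy.2
        have hcj : l.cfun j < l.bt i := hcfun_lt j hj
        have : y = l.cfun j := by omega
        rw [this] at hy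
        exact l.cfun_notmem hjj.1 hy.1
    have hcard_im : im.card = l.pt i := by
      rw [him, Finset.card_image_of_injOn, Nat.card_Icc]
      · omega
      · intro j hj j' hj' heq
        have heq' : l.bt i - l.cfun j = l.bt i - l.cfun j' := heq
        have hj1 : 1 ≤ j ∧ j ≤ l.pt i := by
          have := hj; simp only [Finset.coe_Icc, Set.mem_Icc] at this; exact this
        have hj'1 : 1 ≤ j' ∧ j' ≤ l.pt i := by
          have := hj'; simp only [Finset.coe_Icc, Set.mem_Icc] at this; exact this
        have c1 := hcfun_lt j (Finset.mem_Icc.2 hj1)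
        have c2 := hcfun_lt j' (Finset.mem_Icc.2 hj'1)
        by_contra hne
        rcases lt_or_gt_of_ne hne with h | h
        · have := l.cfun_lt hj1.1 h; omega
        · have := l.cfun_lt hj'1.1 h; omega
    have hbeta_filter : l.betaSet.filter (fun y => y < l.bt i)
        = ((Finset.range l.len).filter (fun k => i < k)).image l.bt := by
      ext y
      rw [Finset.mem_filter, Finset.mem_image]
      constructor
      · rintro ⟨hy, hlt⟩
        obtain ⟨k, hk, rfl⟩ := l.mem_betaSet.1 hy
        refine ⟨k, ?_, rfl⟩
        rw [Finset.mem_filter, Finset.mem_range]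
        refine ⟨hk, ?_⟩
        by_contra h
        have hle := l.bt_le (show k ≤ i by omega) hi
        omega
      · rintro ⟨k, hk, rfl⟩
        rw [Finset.mem_filter, Finset.mem_range] at hk
        exact ⟨l.bt_mem hk.1, l.bt_lt hk.2 hk.1⟩
    have hfiltrange : (Finset.range l.len).filter (fun k => i < k) = Finset.Ico (i+1) l.len := by
      ext k
      rw [Finset.mem_filter, Finset.mem_range, Finset.mem_Ico]
      omega
    have hcardfilt : (l.betaSet.filter (fun y => y < l.bt i)).card = l.len - 1 - i := by
      rw [hbeta_filter, Finset.card_image_of_injOn, hfiltrange, Nat.card_Ico]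
      · omega
      · intro a ha b hb hab
        simp only [Finset.coe_filter, Set.mem_setOf_eq, Finset.mem_range] at ha hb
        exact l.bt_inj ha.1 hb.1 hab
    have hF_sub : F ⊆ Finset.Icc 1 (l.bt i) := by
      intro v hv
      rw [hF, Finset.mem_image] at hv
      obtain ⟨y, hy, rfl⟩ := hv
      rw [Finset.mem_filter] at hy
      rw [Finset.mem_Icc]
      omega
    have hcard_F : F.card = l.len - 1 - i := by
      rw [hF, Finset.card_image_of_injOn, hcardfilt]
      intro y hy y' hy' heq
      have heq' : l.bt i - y = l.bt i - y' := heq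
      simp only [Finset.coe_filter, Set.mem_setOf_eq] at hy hy'
      omega
    have hcard_S : S.card = l.pt i := by
      rw [hS, Finset.card_sdiff_of_subset hF_sub, Nat.card_Icc, hcard_F]
      have hbti : l.bt i = l.pt i + (l.len - 1 - i) := rfl
      omega
    have hSim : im = S := Finset.eq_of_subset_of_card_le him_sub (by omega)
    have htS : t ∈ S := by
      rw [hS, Finset.mem_sdiff, Finset.mem_Icc]
      refine ⟨⟨ht, htx⟩, ?_⟩
      rw [hF, Finset.mem_image]
      rintro ⟨y, hy, hyeq⟩
      rw [Finset.mem_filter] at hy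
      have hyeq' : l.bt i - y = t := hyeq
      have hy2 : y < l.bt i := hy.2
      have : y = l.bt i - t := by omega
      rw [this] at hy
      exact hc hy.1
    rw [← hSim, him, Finset.mem_image] at htS
    obtain ⟨j, hj, hjt⟩ := htS
    rw [Finset.mem_Icc] at hj
    obtain ⟨heq, hpos⟩ := l.hook_add_cfun hi hj.1 hj.2
    have hhook : l.hook i j = t := by
      have := hcfun_lt j (Finset.mem_Icc.2 hj)
      omega
    exact hcore i j hi hj.1 hj.2 (hhook ▸ dvd_refl t)
  · intro hcl i j hi hj1 hj2 hdvd
    obtain ⟨d, hd⟩ := hdvd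
    obtain ⟨heq, hpos⟩ := l.hook_add_cfun hi hj1 hj2
    have hnot := l.cfun_notmem hj1
    have haux : ∀ d x, x ∈ l.betaSet → x = l.cfun j + t * d → False := by
      intro d
      induction d with
      | zero => intro x hx hxe; rw [hxe] at hx; simp at hx; exact hnot hx
      | succ d ih =>
        intro x hx hxe
        have hmul : t * (d + 1) = t * d + t := by ring
        have hxt : t ≤ x := by omega
        have := hcl x hx hxt
        exact ih (x - t) this (by omega)
    exact haux d (l.bt i) (l.bt_mem hi) (by omega)

lemma betaSet_pos {x : ℕ} (hx : x ∈ l.betaSet) : 1 ≤ x := by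
  obtain ⟨i, hi, rfl⟩ := l.mem_betaSet.1 hx
  have h1 := l.pt_pos hi
  have h2 : l.bt i = l.pt i + (l.len - 1 - i) := rfl
  omega

lemma betaSet_noconsec (hd : l.DistinctParts) {x : ℕ} (hx : x ∈ l.betaSet) :
    x + 1 ∉ l.betaSet := by
  intro hx1
  obtain ⟨k', hk', hbk'⟩ := l.mem_betaSet.1 hx
  obtain ⟨k, hk, hbk⟩ := l.mem_betaSet.1 hx1
  have hlt : k < k' := by
    by_contra h
    rcases eq_or_lt_of_le (Nat.le_of_not_lt h) with h' | h'
    · rw [h'] at hbk'; omega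
    · have := l.bt_lt h' hk
      omega
  have h1 : l.bt k' ≤ l.bt (k+1) := l.bt_le (by omega) hk'
  have h2 : l.bt (k+1) + 2 ≤ l.bt k := by
    have hp := l.pt_strict hd (show k < k + 1 by omega) (by omega)
    have e1 : l.bt k = l.pt k + (l.len - 1 - k) := rfl
    have e2 : l.bt (k+1) = l.pt (k+1) + (l.len - 1 - (k+1)) := rfl
    omega
  omega

lemma betaSet_injective : Function.Injective Partn.betaSet := by
  intro l1 l2 h
  have hlen : l1.len = l2.len := by
    rw [← l1.card_betaSet, ← l2.card_betaSet, h]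
  have hbt : ∀ i, i < l1.len → l1.bt i = l2.bt i := by
    intro i hi
    have key : ∀ (l : Partn) (i : ℕ), i < l.len →
        ((l.betaSet).filter (fun y => l.bt i < y)).card = i := by
      intro l i hi
      have : (l.betaSet).filter (fun y => l.bt i < y) = (Finset.range i).image l.bt := by
        ext y
        rw [Finset.mem_filter, Finset.mem_image]
        constructor
        · rintro ⟨hy, hlt⟩
          obtain ⟨k, hk, rfl⟩ := l.mem_betaSet.1 hy
          refine ⟨k, ?_, rfl⟩
          rw [Finset.mem_range]
          by_contra hik
          have hle := l.bt_le (show i ≤ k by omega) hk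
          omega
        · rintro ⟨k, hk, rfl⟩
          rw [Finset.mem_range] at hk
          exact ⟨l.bt_mem (by omega), l.bt_lt hk hi⟩
      rw [this, Finset.card_image_of_injOn, Finset.card_range]
      intro a ha b hb hab
      simp only [Finset.coe_range, Set.mem_Iio] at ha hb
      exact l.bt_inj (by omega) (by omega) hab
    have k1 := key l1 i hi
    have k2 := key l2 i (hlen ▸ hi)
    rw [h] at k1
    -- both l1.bt i and l2.bt i are elements of l2.betaSet with exactly i larger elements
    have m1 : l1.bt i ∈ l2.betaSet := h ▸ l1.bt_mem hi
    have m2 : l2.bt i ∈ l2.betaSet := l2.bt_mem (hlen ▸ hi)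
    by_contra hne
    rcases Nat.lt_or_ge (l1.bt i) (l2.bt i) with hc | hc
    · have hss : (l2.betaSet).filter (fun y => l2.bt i < y) ⊂ (l2.betaSet).filter (fun y => l1.bt i < y) := by
        constructor
        · intro y hy; rw [Finset.mem_filter] at hy ⊢; exact ⟨hy.1, by omega⟩
        · intro hsub
          have : l2.bt i ∈ (l2.betaSet).filter (fun y => l2.bt i < y) := by
            apply hsub; rw [Finset.mem_filter]; exact ⟨m2, hc⟩
          rw [Finset.mem_filter] at this; omega
      have := Finset.card_lt_card hss
      omega
    · have hc' : l2.bt i < l1.bt i := by omega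
      have hss : (l2.betaSet).filter (fun y => l1.bt i < y) ⊂ (l2.betaSet).filter (fun y => l2.bt i < y) := by
        constructor
        · intro y hy; rw [Finset.mem_filter] at hy ⊢; exact ⟨hy.1, by omega⟩
        · intro hsub
          have : l1.bt i ∈ (l2.betaSet).filter (fun y => l1.bt i < y) := by
            apply hsub; rw [Finset.mem_filter]; exact ⟨m1, hc'⟩
          rw [Finset.mem_filter] at this; omega
      have := Finset.card_lt_card hss
      omega
  have hparts : l1.parts = l2.parts := by
    apply List.ext_getElem (by exact hlen)
    intro i h1 h2
    have hb := hbt i h1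
    have e1 : l1.bt i = l1.pt i + (l1.len - 1 - i) := rfl
    have e2 : l2.bt i = l2.pt i + (l2.len - 1 - i) := rfl
    have p1 : l1.pt i = l1.parts[i] := by rw [pt, List.getD_eq_getElem l1.parts 0 h1]
    have p2 : l2.pt i = l2.parts[i] := by rw [pt, List.getD_eq_getElem l2.parts 0 h2]
    omega
  cases l1; cases l2; simp_all

end Partn

namespace Partn

section OfBeta

variable (B : Finset ℕ)

/-- ascending enumeration -/
private def asc (j : ℕ) : ℕ := (B.sort (· ≤ ·)).getD j 0

lemma asc_mem {j : ℕ} (hj : j < B.card) : asc B j ∈ B := by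
  rw [asc, List.getD_eq_getElem _ _ (by rw [Finset.length_sort]; exact hj)]
  rw [← Finset.mem_sort (· ≤ ·)]
  exact List.getElem_mem _

lemma asc_strict {j j' : ℕ} (h : j < j') (hj' : j' < B.card) : asc B j < asc B j' := by
  rw [asc, asc, List.getD_eq_getElem _ _ (by rw [Finset.length_sort]; omega),
    List.getD_eq_getElem _ _ (by rw [Finset.length_sort]; exact hj')]
  exact List.Pairwise.rel_get_of_lt B.sortedLT_sort.pairwise (by exact h)

lemma asc_lb (hpos : ∀ x ∈ B, 1 ≤ x) : ∀ j, j < B.card → j + 1 ≤ asc B j := by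
  intro j
  induction j with
  | zero => intro h; exact hpos _ (asc_mem B h)
  | succ j ih =>
    intro h
    have h1 := ih (by omega)
    have h2 := asc_strict B (show j < j + 1 by omega) h
    have h3 : j.succ = j + 1 := rfl
    omega

lemma asc_gap (hcons : ∀ x ∈ B, x + 1 ∉ B) :
    ∀ d k, k + d < B.card → asc B k + 2 * d ≤ asc B (k + d) := by
  intro d
  induction d with
  | zero => intro k h; have e : k + 0 = k := rfl; rw [e]; omega
  | succ d ih =>
    intro k h
    have h1 := ih k (by omega)
    have h2 := asc_strict B (show k + d < k + (d+1) by omega) h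
    have h3 : asc B (k + d) + 1 ≠ asc B (k + (d+1)) := by
      intro heq
      have := hcons _ (asc_mem B (show k + d < B.card by omega))
      rw [heq] at this
      exact this (asc_mem B h)
    have : k + (d + 1) = k + d + 1 := by omega
    omega

variable (hpos : ∀ x ∈ B, 1 ≤ x) (hcons : ∀ x ∈ B, x + 1 ∉ B)

/-- Build a partition with distinct parts from a β-set. -/
def ofBeta (hpos : ∀ x ∈ B, 1 ≤ x) (hcons : ∀ x ∈ B, x + 1 ∉ B) : Partn where
  parts := List.ofFn (fun i : Fin B.card => asc B (B.card - 1 - i.1) - (B.card - 1 - i.1))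
  pos := by
    intro p hp
    rw [List.mem_ofFn] at hp
    obtain ⟨i, rfl⟩ := hp
    have hk : B.card - 1 - i.1 < B.card := by have := i.2; omega
    have := asc_lb B hpos _ hk
    omega
  sorted := by
    rw [List.pairwise_ofFn]
    intro i j hij
    have hj := j.2
    set ki := B.card - 1 - i.1 with hki
    set kj := B.card - 1 - j.1 with hkj
    have hkk : kj < ki := by have := i.2; have := j.2; omega
    have hik : ki < B.card := by have := i.2; omega
    have hgap := asc_gap B hcons (ki - kj) kj (by omega)
    have : kj + (ki - kj) = ki := by omega
    rw [this] at hgap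
    have hlb := asc_lb B hpos kj (by omega)
    omega

lemma ofBeta_len : (ofBeta B hpos hcons).len = B.card := by
  simp only [len, ofBeta, List.length_ofFn]

lemma ofBeta_distinct : (ofBeta B hpos hcons).DistinctParts := by
  simp only [DistinctParts, ofBeta]
  rw [List.pairwise_ofFn]
  intro i j hij
  have hj := j.2
  set ki := B.card - 1 - i.1 with hki
  set kj := B.card - 1 - j.1 with hkj
  have hkk : kj < ki := by have := i.2; have := j.2; omega
  have hik : ki < B.card := by have := i.2; omega
  have hgap := asc_gap B hcons (ki - kj) kj (by omega)
  have : kj + (ki - kj) = ki := by omega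
  rw [this] at hgap
  have hlb := asc_lb B hpos kj (by omega)
  omega

lemma ofBeta_bt {i : ℕ} (hi : i < B.card) :
    (ofBeta B hpos hcons).bt i = asc B (B.card - 1 - i) := by
  have hlen := ofBeta_len B hpos hcons
  have hpt : (ofBeta B hpos hcons).pt i = asc B (B.card - 1 - i) - (B.card - 1 - i) := by
    simp only [pt, ofBeta]
    rw [List.getD_eq_getElem _ _ (by rw [List.length_ofFn]; exact hi), List.getElem_ofFn]
  have hlb := asc_lb B hpos (B.card - 1 - i) (by omega)
  rw [bt, hpt, hlen]
  omega

lemma ofBeta_betaSet : (ofBeta B hpos hcons).betaSet = B := by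
  ext x
  rw [mem_betaSet, ofBeta_len]
  constructor
  · rintro ⟨i, hi, rfl⟩
    rw [ofBeta_bt B hpos hcons hi]
    exact asc_mem B (by omega)
  · intro hx
    have : x ∈ B.sort (· ≤ ·) := (Finset.mem_sort _).2 hx
    obtain ⟨k, hk, hkx⟩ := List.mem_iff_getElem.1 this
    rw [Finset.length_sort] at hk
    refine ⟨B.card - 1 - k, by omega, ?_⟩
    rw [ofBeta_bt B hpos hcons (by omega)]
    have : B.card - 1 - (B.card - 1 - k) = k := by omega
    rw [this, asc, List.getD_eq_getElem _ _ (by rw [Finset.length_sort]; omega)]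
    exact hkx

lemma ofBeta_size : 2 * (ofBeta B hpos hcons).size + B.card * (B.card - 1)
    = 2 * ∑ x ∈ B, x := by
  have h := (ofBeta B hpos hcons).sum_betaSet
  rw [ofBeta_betaSet, ofBeta_len] at h
  omega

end OfBeta

end Partn

/-! ### The optimization world -/

section Opt

open Finset

/-- valid β-sets for `(t, mt-1)`-cores with distinct parts -/
def ValidB (t m : ℕ) (B : Finset ℕ) : Prop :=
  (∀ x ∈ B, 1 ≤ x ∧ x ≤ m * t - 2) ∧ (∀ x ∈ B, x + 1 ∉ B) ∧ (∀ x ∈ B, t ≤ x → x - t ∈ B)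

/-- twice the size of the associated partition -/
def gF (B : Finset ℕ) : ℤ := 2 * (∑ x ∈ B, (x : ℤ)) - (B.card : ℤ) * ((B.card : ℤ) - 1)

lemma decomp_unique {t r r' j j' : ℕ} (ht : 1 ≤ t) (hr : r < t) (hr' : r' < t)
    (h : r + j * t = r' + j' * t) : r = r' ∧ j = j' := by
  have h1 : (r + j * t) % t = r := by
    rw [Nat.add_mul_mod_self_right, Nat.mod_eq_of_lt hr]
  have h2 : (r' + j' * t) % t = r' := by
    rw [Nat.add_mul_mod_self_right, Nat.mod_eq_of_lt hr']
  have hrr : r = r' := by rw [← h1, ← h2, h]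
  refine ⟨hrr, ?_⟩
  subst hrr
  have : j * t = j' * t := by omega
  exact Nat.eq_of_mul_eq_mul_right (by omega) this

lemma bounded_of_closed {t m : ℕ} (ht : 2 ≤ t) (hm : 2 ≤ m) (B : Finset ℕ)
    (hpos : ∀ x ∈ B, 1 ≤ x) (hcons : ∀ x ∈ B, x + 1 ∉ B)
    (hct : ∀ x ∈ B, t ≤ x → x - t ∈ B) (hcs : ∀ x ∈ B, m * t - 1 ≤ x → x - (m * t - 1) ∈ B) :
    ∀ x ∈ B, x ≤ m * t - 2 := by
  intro x hx
  by_contra hbig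
  have h4 : 4 ≤ m * t := by calc 4 = 2*2 := rfl
                                 _ ≤ m * t := Nat.mul_le_mul hm ht
  have hxge : m * t - 1 ≤ x := by omega
  have iter : ∀ k, k ≤ m - 1 → x - k * t ∈ B := by
    intro k
    induction k with
    | zero => intro _; simpa using hx
    | succ k ih =>
      intro hk
      have hprev := ih (by omega)
      have hkt : (k + 2) * t ≤ m * t := Nat.mul_le_mul_right t (by omega)
      have he1 : (k + 2) * t = k * t + 2 * t := by ring
      have hge : t ≤ x - k * t := by omega
      have := hct _ hprev hge
      have he2 : (k + 1) * t = k * t + t := by ring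
      have heq : x - k * t - t = x - (k + 1) * t := by omega
      rwa [heq] at this
  have hy := hcs x hx hxge
  have hz := iter (m - 1) (le_refl _)
  have hmt : (m - 1) * t + t = m * t := by
    calc (m - 1) * t + t = ((m - 1) + 1) * t := by ring
      _ = m * t := by congr 1; omega
  have hzy : x - (m - 1) * t = (x - (m * t - 1)) + (t - 1) := by omega
  rw [hzy] at hz
  have hypos : 1 ≤ x - (m * t - 1) := hpos _ hy
  have hzt : t ≤ (x - (m * t - 1)) + (t - 1) := by omega
  have hz2 := hct _ hz hzt
  have he : (x - (m * t - 1)) + (t - 1) - t = (x - (m * t - 1)) - 1 := by omega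
  rw [he] at hz2
  have hz3 := hcons _ hz2
  have hee : (x - (m * t - 1)) - 1 + 1 = x - (m * t - 1) := by omega
  rw [hee] at hz3
  exact hz3 hy

/-- number of elements of `B` with residue `r` mod `t` -/
def prof (t : ℕ) (B : Finset ℕ) (r : ℕ) : ℕ := (B.filter (fun x => x % t = r)).card

section Profile

variable {t m : ℕ} {B : Finset ℕ}

lemma prof_chain (ht : 2 ≤ t) (hv : ValidB t m B) {r : ℕ} (hr : r < t) :
    ∀ j, r + j * t ∈ B ↔ j < prof t B r := by
  obtain ⟨hpos, hcons, hcl⟩ := hv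
  have step : ∀ j, r + (j + 1) * t ∈ B → r + j * t ∈ B := by
    intro j hj
    have he : (j + 1) * t = j * t + t := by ring
    have hge : t ≤ r + (j + 1) * t := by omega
    have := hcl _ hj hge
    have he2 : r + (j + 1) * t - t = r + j * t := by omega
    rwa [he2] at this
  have dc : ∀ d j, r + (j + d) * t ∈ B → r + j * t ∈ B := by
    intro d
    induction d with
    | zero => intro j h; simpa using h
    | succ d ih =>
      intro j h
      have he : j + (d + 1) = (j + d) + 1 := by omega
      rw [he] at h
      exact ih j (step _ h)
  intro j
  constructor
  · intro hj
    have hsub : (Finset.range (j + 1)).image (fun i => r + i * t) ⊆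
        B.filter (fun x => x % t = r) := by
      intro x hxx
      rw [Finset.mem_image] at hxx
      obtain ⟨i, hi, rfl⟩ := hxx
      rw [Finset.mem_range] at hi
      rw [Finset.mem_filter]
      constructor
      · have he : i + (j - i) = j := by omega
        apply dc (j - i) i
        rwa [he]
      · rw [Nat.add_mul_mod_self_right, Nat.mod_eq_of_lt hr]
    have hcard : (Finset.range (j + 1)).card ≤ (B.filter (fun x => x % t = r)).card := by
      rw [← Finset.card_image_of_injOn (f := fun i => r + i * t)]
      · exact Finset.card_le_card hsub
      · intro a _ b _ hab
        have : r + a * t = r + b * t := hab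
        exact (decomp_unique (by omega) hr hr this).2
    rw [Finset.card_range] at hcard
    rw [prof]
    omega
  · intro hj
    by_contra hc
    have hsub : B.filter (fun x => x % t = r) ⊆ (Finset.range j).image (fun i => r + i * t) := by
      intro x hxx
      rw [Finset.mem_filter] at hxx
      obtain ⟨hxB, hxr⟩ := hxx
      have hdecomp : x = r + (x / t) * t := by
        conv_lhs => rw [← Nat.mod_add_div' x t]
        rw [hxr]
      rw [Finset.mem_image]
      refine ⟨x / t, ?_, hdecomp.symm⟩
      rw [Finset.mem_range]
      by_contra hge
      have : r + j * t ∈ B := by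
        apply dc (x / t - j) j
        have he : j + (x / t - j) = x / t := by omega
        rw [he, ← hdecomp]
        exact hxB
      exact hc this
    have hcard := Finset.card_le_card hsub
    have := Finset.card_image_le (s := Finset.range j) (f := fun i => r + i * t)
    rw [Finset.card_range] at this
    rw [prof] at hj
    omega

lemma prof_zero (ht : 2 ≤ t) (hv : ValidB t m B) : prof t B 0 = 0 := by
  by_contra h
  have : (0 : ℕ) + 0 * t ∈ B := (prof_chain ht hv (by omega) 0).2 (by omega)
  simp at this
  have := hv.1 _ this
  omega

lemma prof_big (ht : 2 ≤ t) {r : ℕ} (hr : t ≤ r) : prof t B r = 0 := by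
  rw [prof, Finset.card_eq_zero, Finset.filter_eq_empty_iff]
  intro x _
  have := Nat.mod_lt x (show 0 < t by omega)
  omega

lemma prof_adj (ht : 2 ≤ t) (hv : ValidB t m B) {r : ℕ} (hr : r + 1 < t)
    (h : prof t B r ≠ 0) : prof t B (r + 1) = 0 := by
  by_contra h1
  have hx : r + 0 * t ∈ B := (prof_chain ht hv (by omega) 0).2 (by omega)
  have hx1 : (r + 1) + 0 * t ∈ B := (prof_chain ht hv hr 0).2 (by omega)
  simp at hx hx1
  exact hv.2.1 _ hx hx1

lemma prof_cap1 (ht : 2 ≤ t) (hm : 2 ≤ m) (hv : ValidB t m B) {r : ℕ} (hr : r < t) :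
    prof t B r ≤ m := by
  by_contra h
  have hx : r + m * t ∈ B := (prof_chain ht hv hr m).2 (by omega)
  have := (hv.1 _ hx).2
  have h4 : 4 ≤ m * t := by calc 4 = 2*2 := rfl
                                 _ ≤ m * t := Nat.mul_le_mul hm ht
  omega

lemma prof_capt (ht : 2 ≤ t) (hm : 2 ≤ m) (hv : ValidB t m B) :
    prof t B (t - 1) ≤ m - 1 := by
  by_contra h
  have hx : (t - 1) + (m - 1) * t ∈ B := (prof_chain ht hv (by omega) (m - 1)).2 (by omega)
  have := (hv.1 _ hx).2
  have he : (m - 1) * t + t = m * t := by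
    calc (m - 1) * t + t = ((m - 1) + 1) * t := by ring
      _ = m * t := by congr 1; omega
  have h4 : 4 ≤ m * t := by calc 4 = 2*2 := rfl
                                 _ ≤ m * t := Nat.mul_le_mul hm ht
  omega

end Profile

lemma gF_insert {B : Finset ℕ} {x : ℕ} (hx : x ∉ B) :
    gF (insert x B) = gF B + 2 * x - 2 * B.card := by
  rw [gF, gF, Finset.sum_insert hx, Finset.card_insert_of_notMem hx]
  push_cast
  ring

lemma gF_erase {B : Finset ℕ} {x : ℕ} (hx : x ∈ B) :
    gF (B.erase x) = gF B - 2 * x + 2 * ((B.card : ℤ) - 1) := by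
  have hcard : (B.erase x).card = B.card - 1 := Finset.card_erase_of_mem hx
  have hcp : 1 ≤ B.card := Finset.card_pos.2 ⟨x, hx⟩
  have hsum : ∑ y ∈ B.erase x, (y : ℤ) = (∑ y ∈ B, (y : ℤ)) - x := by
    rw [← Finset.add_sum_erase _ _ hx]
    ring
  rw [gF, gF, hsum, hcard]
  have : ((B.card - 1 : ℕ) : ℤ) = (B.card : ℤ) - 1 := by
    push_cast [hcp]
    omega
  rw [this]
  ring

end Opt

section Moves

open Finset

variable {t m : ℕ} {B : Finset ℕ}

lemma mod_of_decomp {r j : ℕ} (hr : r < t) : (r + j * t) % t = r := by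
  rw [Nat.add_mul_mod_self_right, Nat.mod_eq_of_lt hr]

lemma heights_full (ht : 2 ≤ t) (hm : 2 ≤ m) (hv : ValidB t m B)
    (hmax : ∀ B', ValidB t m B' → gF B' ≤ gF B) :
    ∀ r, r < t → prof t B r = 0 ∨ (r + 2 ≤ t ∧ prof t B r = m) ∨ (r + 1 = t ∧ prof t B r = m - 1) := by
  intro r hr
  by_contra hcon
  push_neg at hcon
  obtain ⟨hn0, hnm, hnm1⟩ := hcon
  set n := prof t B r with hn
  have hr1 : 1 ≤ r := by
    by_contra h
    have : r = 0 := by omega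
    rw [this] at hn
    exact hn0 (hn ▸ prof_zero ht hv)
  have hcap := prof_cap1 ht hm hv hr
  have hnlt : r + 2 ≤ t → n < m := by
    intro h2
    rcases Nat.lt_or_ge n m with h | h
    · exact h
    · exact absurd (by omega : n = m) (fun he => (hnm h2 he))
  have hnlt1 : r + 1 = t → n < m - 1 := by
    intro h2
    have := prof_capt ht hm hv
    have hre : r = t - 1 := by omega
    rw [hre] at hn
    rcases Nat.lt_or_ge n (m-1) with h | h
    · exact h
    · exact absurd (by omega : n = m - 1) (fun he => (hnm1 h2 he))
  set x := r + n * t with hx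
  set x' := r + (n - 1) * t with hx'
  have hx'B : x' ∈ B := (prof_chain ht hv hr (n-1)).2 (by omega)
  have hxnotB : x ∉ B := by
    intro h
    have := (prof_chain ht hv hr n).1 h
    omega
  have hmt4 : 4 ≤ m * t := by calc 4 = 2*2 := rfl
                                   _ ≤ m * t := Nat.mul_le_mul hm ht
  have hbound : x ≤ m * t - 2 := by
    rcases Nat.lt_or_ge (r + 2) (t + 1) with h2 | h2
    · have hnm' := hnlt (by omega)
      have h5 : n * t ≤ (m - 1) * t := Nat.mul_le_mul_right t (by omega)
      have h6 : (m - 1) * t + t = m * t := by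
        calc (m - 1) * t + t = ((m - 1) + 1) * t := by ring
          _ = m * t := by congr 1; omega
      omega
    · have hre : r + 1 = t := by omega
      have hnm' := hnlt1 hre
      have h5 : n * t ≤ (m - 2) * t := Nat.mul_le_mul_right t (by omega)
      have h6 : (m - 2) * t + 2 * t = m * t := by
        calc (m - 2) * t + 2 * t = ((m - 2) + 2) * t := by ring
          _ = m * t := by congr 1; omega
      omega
  -- validity of insert
  have hIns : ValidB t m (insert x B) := by
    refine ⟨?_, ?_, ?_⟩
    · intro y hy
      rcases Finset.mem_insert.1 hy with rfl | hy
      · constructor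
        · omega
        · exact hbound
      · exact hv.1 _ hy
    · intro y hy
      rcases Finset.mem_insert.1 hy with rfl | hy
      · intro hmem
        rcases Finset.mem_insert.1 hmem with h | h
        · omega
        · rcases Nat.lt_or_ge (r + 1) t with hlt | hge
          · have hadj := prof_adj ht hv hlt (by omega)
            have hy1 : x + 1 = (r + 1) + n * t := by omega
            rw [hy1] at h
            have := (prof_chain ht hv hlt n).1 h
            omega
          · have hre : r + 1 = t := by omega
            have he : (n + 1) * t = n * t + t := by ring
            have hy1 : x + 1 = 0 + (n + 1) * t := by omega
            rw [hy1] at h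
            have := (prof_chain ht hv (by omega) (n+1)).1 h
            have := prof_zero ht hv
            omega
      · intro hmem
        rcases Finset.mem_insert.1 hmem with h | h
        · -- y + 1 = x, y ∈ B
          rcases Nat.lt_or_ge 1 r with hr2 | hr2
          · have hy1 : y = (r - 1) + n * t := by omega
            rw [hy1] at hy
            have h1 := (prof_chain ht hv (by omega) n).1 hy
            have hadj := prof_adj ht hv (r := r - 1) (by omega) (by omega)
            have : r - 1 + 1 = r := by omega
            rw [this] at hadj
            omega
          · have hre : r = 1 := by omega
            have hy1 : y = 0 + n * t := by omega
            rw [hy1] at hy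
            have h1 := (prof_chain ht hv (by omega) n).1 hy
            have := prof_zero ht hv
            omega
        · exact hv.2.1 _ hy h
    · intro y hy hty
      rcases Finset.mem_insert.1 hy with rfl | hy
      · have he : n * t = (n - 1) * t + t := by
          calc n * t = ((n-1) + 1) * t := by congr 1; omega
            _ = (n - 1) * t + t := by ring
        have hxx : x - t = x' := by omega
        rw [hxx]
        exact Finset.mem_insert_of_mem hx'B
      · exact Finset.mem_insert_of_mem (hv.2.2 _ hy hty)
  have hErs : ValidB t m (B.erase x') := by
    refine ⟨?_, ?_, ?_⟩
    · intro y hy; exact hv.1 _ (Finset.mem_of_mem_erase hy)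
    · intro y hy hy1
      exact hv.2.1 _ (Finset.mem_of_mem_erase hy) (Finset.mem_of_mem_erase hy1)
    · intro y hy hty
      have hyB := Finset.mem_of_mem_erase hy
      have hyx' := Finset.ne_of_mem_erase hy
      have hytB := hv.2.2 _ hyB hty
      rw [Finset.mem_erase]
      refine ⟨?_, hytB⟩
      intro hcontra
      have he : n * t = (n - 1) * t + t := by
        calc n * t = ((n-1) + 1) * t := by congr 1; omega
          _ = (n - 1) * t + t := by ring
      have : y = x := by omega
      rw [this] at hyB
      exact hxnotB hyB
  have h1 := hmax _ hIns
  have h2 := hmax _ hErs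
  rw [gF_insert hxnotB] at h1
  rw [gF_erase hx'B] at h2
  have hcast : (x : ℤ) = (x' : ℤ) + t := by
    have he : n * t = (n - 1) * t + t := by
      calc n * t = ((n-1) + 1) * t := by congr 1; omega
        _ = (n - 1) * t + t := by ring
    have hxe : x = x' + t := by omega
    exact_mod_cast hxe
  have hN : 1 ≤ B.card := Finset.card_pos.2 ⟨x', hx'B⟩
  have ht2 : (2 : ℤ) ≤ (t : ℤ) := by exact_mod_cast ht
  have hN' : (1 : ℤ) ≤ (B.card : ℤ) := by exact_mod_cast hN
  linarith

lemma slide_improve (ht : 2 ≤ t) (hm : 2 ≤ m) (hv : ValidB t m B) (r d : ℕ)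
    (hr1 : 1 ≤ r) (hd1 : 1 ≤ d) (hd2 : d ≤ 2) (hrd : r + d + 2 ≤ t)
    (hocc : prof t B r ≠ 0) (h0 : prof t B (r + d) = 0) (h1 : prof t B (r + d + 1) = 0) :
    ∃ B', ValidB t m B' ∧ gF B + 1 ≤ gF B' := by
  set n := prof t B r with hn
  have hrt : r < t := by omega
  have hcap : n ≤ m := prof_cap1 ht hm hv hrt
  set Bold := B.filter (fun x => ¬ x % t = r) with hBold
  set stk := (Finset.range n).image (fun j => (r + d) + j * t) with hstk
  set B' := Bold ∪ stk with hB'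
  have mem_stk : ∀ x, x ∈ stk ↔ ∃ j, j < n ∧ x = (r + d) + j * t := by
    intro x
    rw [hstk, Finset.mem_image]
    constructor
    · rintro ⟨j, hj, rfl⟩; exact ⟨j, Finset.mem_range.1 hj, rfl⟩
    · rintro ⟨j, hj, rfl⟩; exact ⟨j, Finset.mem_range.2 hj, rfl⟩
  have mem_B' : ∀ x, x ∈ B' ↔ (x ∈ B ∧ ¬ x % t = r) ∨ ∃ j, j < n ∧ x = (r + d) + j * t := by
    intro x
    rw [hB', Finset.mem_union, hBold, Finset.mem_filter, mem_stk]
  have hdisj : Disjoint Bold stk := by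
    rw [Finset.disjoint_left]
    intro x hxo hxs
    obtain ⟨j, hj, rfl⟩ := (mem_stk _).1 hxs
    rw [hBold, Finset.mem_filter] at hxo
    have := (prof_chain ht hv (show r + d < t by omega) j).1 hxo.1
    omega
  have hstk_card : stk.card = n := by
    rw [hstk, Finset.card_image_of_injOn, Finset.card_range]
    intro a _ b _ hab
    have : (r + d) + a * t = (r + d) + b * t := hab
    exact (decomp_unique (by omega) (show r + d < t by omega) (by omega) this).2
  have hfilt_eq : B.filter (fun x => x % t = r) = (Finset.range n).image (fun j => r + j * t) := by
    ext x
    rw [Finset.mem_filter, Finset.mem_image]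
    constructor
    · rintro ⟨hxB, hxr⟩
      have hdecomp : x = r + (x / t) * t := by
        conv_lhs => rw [← Nat.mod_add_div' x t]
        rw [hxr]
      refine ⟨x / t, ?_, hdecomp.symm⟩
      rw [Finset.mem_range]
      rw [hdecomp] at hxB
      exact (prof_chain ht hv hrt _).1 hxB
    · rintro ⟨j, hj, rfl⟩
      rw [Finset.mem_range] at hj
      exact ⟨(prof_chain ht hv hrt j).2 hj, mod_of_decomp hrt⟩
  have hold_card : Bold.card = B.card - n := by
    have := Finset.card_filter_add_card_filter_not (s := B) (p := fun x => x % t = r)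
    have h2 : (B.filter (fun x => x % t = r)).card = n := by
      rw [hfilt_eq, Finset.card_image_of_injOn, Finset.card_range]
      intro a _ b _ hab
      have : r + a * t = r + b * t := hab
      exact (decomp_unique (by omega) hrt hrt this).2
    rw [hBold]
    omega
  have hn_le : n ≤ B.card := by
    have := Finset.card_filter_le B (fun x => x % t = r)
    have h2 : (B.filter (fun x => x % t = r)).card = n := by
      rw [hfilt_eq, Finset.card_image_of_injOn, Finset.card_range]
      intro a _ b _ hab
      have : r + a * t = r + b * t := hab
      exact (decomp_unique (by omega) hrt hrt this).2
    omega
  have hB'_card : B'.card = B.card := by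
    rw [hB', Finset.card_union_of_disjoint hdisj, hold_card, hstk_card]
    omega
  have hsum : (∑ x ∈ B', (x : ℤ)) = (∑ x ∈ B, (x : ℤ)) + n * d := by
    rw [hB', Finset.sum_union hdisj]
    have hsplit : (∑ x ∈ B, (x : ℤ)) =
        (∑ x ∈ B.filter (fun x => x % t = r), (x : ℤ)) + ∑ x ∈ Bold, (x : ℤ) := by
      rw [hBold]
      exact (Finset.sum_filter_add_sum_filter_not B _ _).symm
    have hs1 : (∑ x ∈ B.filter (fun x => x % t = r), (x : ℤ)) =
        ∑ j ∈ Finset.range n, ((r : ℤ) + j * t) := by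
      rw [hfilt_eq, Finset.sum_image]
      · apply Finset.sum_congr rfl
        intro j _
        push_cast
        ring
      · intro a _ b _ hab
        have : r + a * t = r + b * t := hab
        exact (decomp_unique (by omega) hrt hrt this).2
    have hs2 : (∑ x ∈ stk, (x : ℤ)) = ∑ j ∈ Finset.range n, ((r : ℤ) + d + j * t) := by
      rw [hstk, Finset.sum_image]
      · apply Finset.sum_congr rfl
        intro j _
        push_cast
        ring
      · intro a _ b _ hab
        have : (r + d) + a * t = (r + d) + b * t := hab
        exact (decomp_unique (by omega) (show r + d < t by omega) (by omega) this).2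
    have hs3 : ∑ j ∈ Finset.range n, ((r : ℤ) + d + j * t)
        = (∑ j ∈ Finset.range n, ((r : ℤ) + j * t)) + n * d := by
      have hc : ∀ j ∈ Finset.range n, ((r : ℤ) + d + j * t) = ((r : ℤ) + j * t) + (d : ℤ) :=
        fun j _ => by ring
      rw [Finset.sum_congr rfl hc, Finset.sum_add_distrib, Finset.sum_const, Finset.card_range,
        nsmul_eq_mul]
    rw [hs2, hs3, ← hs1]
    linarith [hsplit]
  have hgF : gF B' = gF B + 2 * n * d := by
    rw [gF, gF, hB'_card, hsum]
    ring
  have hVB' : ValidB t m B' := by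
    refine ⟨?_, ?_, ?_⟩
    · intro y hy
      rcases (mem_B' y).1 hy with ⟨hyB, _⟩ | ⟨j, hj, rfl⟩
      · exact hv.1 _ hyB
      · constructor
        · omega
        · have h5 : j * t ≤ (m - 1) * t := Nat.mul_le_mul_right t (by omega)
          have h6 : (m - 1) * t + t = m * t := by
            calc (m - 1) * t + t = ((m - 1) + 1) * t := by ring
              _ = m * t := by congr 1; omega
          omega
    · intro y hy hy1
      rcases (mem_B' y).1 hy with ⟨hyB, hyr⟩ | ⟨j, hj, rfl⟩
      · rcases (mem_B' (y+1)).1 hy1 with ⟨hy1B, _⟩ | ⟨j, hj, he⟩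
        · exact hv.2.1 _ hyB hy1B
        · rcases Nat.lt_or_ge d 2 with hd | hd
          · have hde : d = 1 := by omega
            have : y % t = r := by
              have : y = r + j * t := by omega
              rw [this]
              exact mod_of_decomp hrt
            exact hyr this
          · have hde : d = 2 := by omega
            have hadj := prof_adj ht hv (r := r) (by omega) hocc
            have hye : y = (r + 1) + j * t := by omega
            rw [hye] at hyB
            have := (prof_chain ht hv (show r + 1 < t by omega) j).1 hyB
            omega
      · rcases (mem_B' ((r + d) + j * t + 1)).1 hy1 with ⟨hy1B, _⟩ | ⟨j', hj', he⟩
        · have hye : (r + d) + j * t + 1 = (r + d + 1) + j * t := by omega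
          rw [hye] at hy1B
          have := (prof_chain ht hv (show r + d + 1 < t by omega) j).1 hy1B
          omega
        · rcases Nat.lt_or_ge j j' with hlt | hge
          · have h5 : (j + 1) * t ≤ j' * t := Nat.mul_le_mul_right t (by omega)
            have h6 : (j + 1) * t = j * t + t := by ring
            omega
          · have h5 : j' * t ≤ j * t := Nat.mul_le_mul_right t hge
            omega
    · intro y hy hty
      rcases (mem_B' y).1 hy with ⟨hyB, hyr⟩ | ⟨j, hj, rfl⟩
      · have hytB := hv.2.2 _ hyB hty
        have hmod : y % t = (y - t) % t := Nat.mod_eq_sub_mod hty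
        apply (mem_B' _).2
        left
        exact ⟨hytB, by rw [← hmod]; exact hyr⟩
      · have hjpos : 1 ≤ j := by
          by_contra h
          have : j = 0 := by omega
          rw [this] at hty
          simp at hty
          omega
        have he : j * t = (j - 1) * t + t := by
          calc j * t = ((j - 1) + 1) * t := by congr 1; omega
            _ = (j - 1) * t + t := by ring
        apply (mem_B' _).2
        right
        exact ⟨j - 1, by omega, by omega⟩
  refine ⟨B', hVB', ?_⟩
  rw [hgF]
  have h1 : 1 ≤ n * d := by
    calc 1 = 1 * 1 := rfl
      _ ≤ n * d := Nat.mul_le_mul (by omega) hd1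
  have h1' : (1 : ℤ) ≤ (n : ℤ) * (d : ℤ) := by exact_mod_cast h1
  linarith

end Moves

section Configs

open Finset

def stackF (t r h : ℕ) : Finset ℕ := (Finset.range h).image (fun j => r + j * t)

def confB (t m : ℕ) : ℕ → Finset ℕ
  | 0 => ∅
  | k+1 => confB t m k ∪ stackF t (t - 2*(k+1)) m

def confA (t m : ℕ) : ℕ → Finset ℕ
  | 0 => stackF t (t-1) (m-1)
  | k+1 => confA t m k ∪ stackF t (t - 1 - 2*(k+1)) m

/-- the concave quadratic giving twice the size of configuration `k` -/
def Phi2 (t m k : ℕ) : ℤ :=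
  (m : ℤ) * k * (t * (m + 1) - k * (m + 2) - 1)

variable {t m : ℕ}

lemma mem_stackF {r h x : ℕ} : x ∈ stackF t r h ↔ ∃ j, j < h ∧ x = r + j * t := by
  rw [stackF, Finset.mem_image]
  constructor
  · rintro ⟨j, hj, rfl⟩; exact ⟨j, Finset.mem_range.1 hj, rfl⟩
  · rintro ⟨j, hj, rfl⟩; exact ⟨j, Finset.mem_range.2 hj, rfl⟩

lemma card_stackF (ht : 2 ≤ t) {r h : ℕ} (hr : r < t) : (stackF t r h).card = h := by
  rw [stackF, Finset.card_image_of_injOn, Finset.card_range]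
  intro a _ b _ hab
  have : r + a * t = r + b * t := hab
  exact (decomp_unique (by omega) hr hr this).2

lemma gF_stackF (ht : 2 ≤ t) {r h : ℕ} (hr : r < t) :
    gF (stackF t r h) = 2 * h * r + ((t : ℤ) - 1) * h * (h - 1) := by
  induction h with
  | zero => simp [gF, stackF]
  | succ h ih =>
    have hins : stackF t r (h+1) = insert (r + h * t) (stackF t r h) := by
      rw [stackF, stackF, Finset.range_add_one, Finset.image_insert]
    have hnot : r + h * t ∉ stackF t r h := by
      rw [mem_stackF]
      rintro ⟨j, hj, he⟩
      have := (decomp_unique (show 1 ≤ t by omega) hr hr he).2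
      omega
    rw [hins, gF_insert hnot, ih, card_stackF ht hr]
    push_cast
    ring

lemma gF_union {X Y : Finset ℕ} (h : Disjoint X Y) :
    gF (X ∪ Y) = gF X + gF Y - 2 * X.card * Y.card := by
  rw [gF, gF, gF, Finset.sum_union h, Finset.card_union_of_disjoint h]
  push_cast
  ring

lemma mem_confB {k x : ℕ} : x ∈ confB t m k ↔ ∃ i, i < k ∧ ∃ j, j < m ∧ x = (t - 2*(i+1)) + j * t := by
  induction k with
  | zero => simp [confB]
  | succ k ih =>
    rw [confB, Finset.mem_union, ih, mem_stackF]
    constructor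
    · rintro (⟨i, hi, hj⟩ | ⟨j, hj, he⟩)
      · exact ⟨i, by omega, hj⟩
      · exact ⟨k, by omega, j, hj, he⟩
    · rintro ⟨i, hi, j, hj, he⟩
      rcases Nat.lt_or_ge i k with h | h
      · exact Or.inl ⟨i, h, j, hj, he⟩
      · have : i = k := by omega
        subst this
        exact Or.inr ⟨j, hj, he⟩

lemma mem_confA {k x : ℕ} : x ∈ confA t m k ↔
    (∃ j, j < m - 1 ∧ x = (t - 1) + j * t) ∨
    ∃ i, i < k ∧ ∃ j, j < m ∧ x = (t - 1 - 2*(i+1)) + j * t := by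
  induction k with
  | zero => simp [confA, mem_stackF]
  | succ k ih =>
    rw [confA, Finset.mem_union, ih, mem_stackF]
    constructor
    · rintro ((h | ⟨i, hi, hj⟩) | ⟨j, hj, he⟩)
      · exact Or.inl h
      · exact Or.inr ⟨i, by omega, hj⟩
      · exact Or.inr ⟨k, by omega, j, hj, he⟩
    · rintro (h | ⟨i, hi, j, hj, he⟩)
      · exact Or.inl (Or.inl h)
      · rcases Nat.lt_or_ge i k with h | h
        · exact Or.inl (Or.inr ⟨i, h, j, hj, he⟩)
        · have : i = k := by omega
          subst this
          exact Or.inr ⟨j, hj, he⟩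

lemma disj_confB_stack (ht : 2 ≤ t) {k : ℕ} (hk : 2*(k+1) + 1 ≤ t) :
    Disjoint (confB t m k) (stackF t (t - 2*(k+1)) m) := by
  rw [Finset.disjoint_left]
  intro x hx hx'
  obtain ⟨i, hi, j, hj, rfl⟩ := mem_confB.1 hx
  obtain ⟨j', hj', he⟩ := mem_stackF.1 hx'
  have := decomp_unique (show 1 ≤ t by omega) (show t - 2*(i+1) < t by omega)
    (show t - 2*(k+1) < t by omega) he
  omega

lemma card_confB (ht : 2 ≤ t) {k : ℕ} (hk : 2*k + 1 ≤ t) : (confB t m k).card = m * k := by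
  induction k with
  | zero => simp [confB]
  | succ k ih =>
    rw [confB, Finset.card_union_of_disjoint (disj_confB_stack ht (by omega)),
      ih (by omega), card_stackF ht (by omega)]
    ring

lemma gF_confB (ht : 2 ≤ t) {k : ℕ} (hk : 2*k + 1 ≤ t) : gF (confB t m k) = Phi2 t m k := by
  induction k with
  | zero => simp [confB, gF, Phi2]
  | succ k ih =>
    rw [confB, gF_union (disj_confB_stack ht (by omega)), ih (by omega),
      card_confB ht (by omega), card_stackF ht (by omega), gF_stackF ht (by omega), Phi2, Phi2]
    have hc : ((t - 2*(k+1) : ℕ) : ℤ) = (t : ℤ) - 2*((k : ℤ)+1) := by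
      push_cast [Nat.cast_sub (show 2*(k+1) ≤ t by omega)]
      ring
    rw [hc]
    push_cast
    ring

lemma disj_confA_stack (ht : 2 ≤ t) {k : ℕ} (hk : 2*(k+1) + 2 ≤ t) :
    Disjoint (confA t m k) (stackF t (t - 1 - 2*(k+1)) m) := by
  rw [Finset.disjoint_left]
  intro x hx hx'
  obtain ⟨j', hj', he⟩ := mem_stackF.1 hx'
  rcases mem_confA.1 hx with ⟨j, hj, he2⟩ | ⟨i, hi, j, hj, he2⟩
  · rw [he2] at he
    have := decomp_unique (show 1 ≤ t by omega) (show t - 1 < t by omega)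
      (show t - 1 - 2*(k+1) < t by omega) he
    omega
  · rw [he2] at he
    have := decomp_unique (show 1 ≤ t by omega) (show t - 1 - 2*(i+1) < t by omega)
      (show t - 1 - 2*(k+1) < t by omega) he
    omega

lemma card_confA (ht : 2 ≤ t) (hm : 2 ≤ m) {k : ℕ} (hk : 2*(k+1) ≤ t) :
    (confA t m k).card = m * (k + 1) - 1 := by
  induction k with
  | zero =>
    rw [confA, card_stackF ht (by omega)]
    omega
  | succ k ih =>
    rw [confA, Finset.card_union_of_disjoint (disj_confA_stack ht (by omega)),
      ih (by omega), card_stackF ht (by omega)]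
    have : 1 ≤ m * (k + 1) := by
      calc 1 = 1 * 1 := rfl
        _ ≤ m * (k+1) := Nat.mul_le_mul (by omega) (by omega)
    ring_nf
    omega

lemma gF_confA (ht : 2 ≤ t) (hm : 2 ≤ m) {k : ℕ} (hk : 2*(k+1) ≤ t) :
    gF (confA t m k) = Phi2 t m (k+1) + 2 * m * (2*((k : ℤ)+1) - t) := by
  induction k with
  | zero =>
    rw [confA, gF_stackF ht (by omega), Phi2]
    have hc : ((t - 1 : ℕ) : ℤ) = (t : ℤ) - 1 := by
      push_cast [Nat.cast_sub (show 1 ≤ t by omega)]; ring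
    have hc2 : ((m - 1 : ℕ) : ℤ) = (m : ℤ) - 1 := by
      push_cast [Nat.cast_sub (show 1 ≤ m by omega)]; ring
    rw [hc, hc2]
    push_cast
    ring
  | succ k ih =>
    rw [confA, gF_union (disj_confA_stack ht (by omega)), ih (by omega),
      card_confA ht hm (by omega), card_stackF ht (by omega), gF_stackF ht (by omega),
      Phi2, Phi2]
    have hc : ((t - 1 - 2*(k+1) : ℕ) : ℤ) = (t : ℤ) - 1 - 2*((k : ℤ)+1) := by
      push_cast [Nat.cast_sub (show 2*(k+1) ≤ t - 1 by omega), Nat.cast_sub (show 1 ≤ t by omega)]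
      ring
    have hc2 : ((m * (k+1) - 1 : ℕ) : ℤ) = (m : ℤ) * ((k : ℤ)+1) - 1 := by
      have : 1 ≤ m * (k + 1) := by
        calc 1 = 1 * 1 := rfl
          _ ≤ m * (k+1) := Nat.mul_le_mul (by omega) (by omega)
      push_cast [Nat.cast_sub this]
      ring
    rw [hc, hc2]
    push_cast
    ring

lemma validB_confB (ht : 2 ≤ t) (hm : 2 ≤ m) {k : ℕ} (hk : 2*k + 1 ≤ t) :
    ValidB t m (confB t m k) := by
  have h4 : 4 ≤ m * t := by calc 4 = 2*2 := rfl
                                 _ ≤ m * t := Nat.mul_le_mul hm ht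
  refine ⟨?_, ?_, ?_⟩
  · intro x hx
    obtain ⟨i, hi, j, hj, rfl⟩ := mem_confB.1 hx
    constructor
    · omega
    · have h5 : j * t ≤ (m - 1) * t := Nat.mul_le_mul_right t (by omega)
      have h6 : (m - 1) * t + t = m * t := by
        calc (m - 1) * t + t = ((m - 1) + 1) * t := by ring
          _ = m * t := by congr 1; omega
      omega
  · intro x hx hx1
    obtain ⟨i, hi, j, hj, rfl⟩ := mem_confB.1 hx
    obtain ⟨i', hi', j', hj', he⟩ := mem_confB.1 hx1
    have he2 : (t - 2*(i+1) + 1) + j * t = (t - 2*(i'+1)) + j' * t := by omega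
    have := decomp_unique (show 1 ≤ t by omega) (show t - 2*(i+1) + 1 < t by omega)
      (show t - 2*(i'+1) < t by omega) he2
    omega
  · intro x hx htx
    obtain ⟨i, hi, j, hj, rfl⟩ := mem_confB.1 hx
    have hjpos : 1 ≤ j := by
      by_contra h
      have hj0 : j = 0 := by omega
      rw [hj0] at htx
      simp at htx
      omega
    have he : j * t = (j - 1) * t + t := by
      calc j * t = ((j - 1) + 1) * t := by congr 1; omega
        _ = (j - 1) * t + t := by ring
    apply mem_confB.2
    exact ⟨i, hi, j - 1, by omega, by omega⟩

lemma validB_confA (ht : 2 ≤ t) (hm : 2 ≤ m) {k : ℕ} (hk : 2*(k+1) ≤ t) :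
    ValidB t m (confA t m k) := by
  have h4 : 4 ≤ m * t := by calc 4 = 2*2 := rfl
                                 _ ≤ m * t := Nat.mul_le_mul hm ht
  have hmt : (m - 1) * t + t = m * t := by
    calc (m - 1) * t + t = ((m - 1) + 1) * t := by ring
      _ = m * t := by congr 1; omega
  refine ⟨?_, ?_, ?_⟩
  · intro x hx
    rcases mem_confA.1 hx with ⟨j, hj, rfl⟩ | ⟨i, hi, j, hj, rfl⟩
    · constructor
      · omega
      · have h5 : j * t ≤ (m - 2) * t := Nat.mul_le_mul_right t (by omega)
        have h6 : (m - 2) * t + 2 * t = m * t := by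
          calc (m - 2) * t + 2 * t = ((m - 2) + 2) * t := by ring
            _ = m * t := by congr 1; omega
        omega
    · constructor
      · omega
      · have h5 : j * t ≤ (m - 1) * t := Nat.mul_le_mul_right t (by omega)
        omega
  · intro x hx hx1
    rcases mem_confA.1 hx with ⟨j, hj, rfl⟩ | ⟨i, hi, j, hj, rfl⟩
    · rcases mem_confA.1 hx1 with ⟨j', hj', he⟩ | ⟨i', hi', j', hj', he⟩
      · have he2 : 0 + (j+1) * t = (t - 1) + j' * t := by
          have : (j + 1) * t = j * t + t := by ring
          omega
        have := decomp_unique (show 1 ≤ t by omega) (show 0 < t by omega)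
          (show t - 1 < t by omega) he2
        omega
      · have he2 : 0 + (j+1) * t = (t - 1 - 2*(i'+1)) + j' * t := by
          have : (j + 1) * t = j * t + t := by ring
          omega
        have := decomp_unique (show 1 ≤ t by omega) (show 0 < t by omega)
          (show t - 1 - 2*(i'+1) < t by omega) he2
        omega
    · rcases mem_confA.1 hx1 with ⟨j', hj', he⟩ | ⟨i', hi', j', hj', he⟩
      · have he2 : (t - 1 - 2*(i+1) + 1) + j * t = (t - 1) + j' * t := by omega
        have := decomp_unique (show 1 ≤ t by omega) (show t - 1 - 2*(i+1) + 1 < t by omega)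
          (show t - 1 < t by omega) he2
        omega
      · have he2 : (t - 1 - 2*(i+1) + 1) + j * t = (t - 1 - 2*(i'+1)) + j' * t := by omega
        have := decomp_unique (show 1 ≤ t by omega) (show t - 1 - 2*(i+1) + 1 < t by omega)
          (show t - 1 - 2*(i'+1) < t by omega) he2
        omega
  · intro x hx htx
    rcases mem_confA.1 hx with ⟨j, hj, rfl⟩ | ⟨i, hi, j, hj, rfl⟩
    · have hjpos : 1 ≤ j := by
        by_contra h
        have hj0 : j = 0 := by omega
        rw [hj0] at htx
        simp at htx
        omega
      have he : j * t = (j - 1) * t + t := by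
        calc j * t = ((j - 1) + 1) * t := by congr 1; omega
          _ = (j - 1) * t + t := by ring
      apply mem_confA.2
      exact Or.inl ⟨j - 1, by omega, by omega⟩
    · have hjpos : 1 ≤ j := by
        by_contra h
        have hj0 : j = 0 := by omega
        rw [hj0] at htx
        simp at htx
        omega
      have he : j * t = (j - 1) * t + t := by
        calc j * t = ((j - 1) + 1) * t := by congr 1; omega
          _ = (j - 1) * t + t := by ring
      apply mem_confA.2
      exact Or.inr ⟨i, hi, j - 1, by omega, by omega⟩

end Configs

section Classify

open Finset

variable {t m : ℕ}

lemma occupied_of_mem (ht : 2 ≤ t) {B : Finset ℕ} (hv : ValidB t m B) {x : ℕ} (hx : x ∈ B) :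
    prof t B (x % t) ≠ 0 := by
  have hrt : x % t < t := Nat.mod_lt x (by omega)
  have hdecomp : x = x % t + (x / t) * t := (Nat.mod_add_div' x t).symm
  rw [hdecomp] at hx
  have := (prof_chain ht hv hrt (x / t)).1 hx
  exact fun h0 => Nat.not_lt_zero _ (h0 ▸ this)

lemma climb (ht : 2 ≤ t) (hm : 2 ≤ m) {B : Finset ℕ} (hv : ValidB t m B)
    (hmax : ∀ B', ValidB t m B' → gF B' ≤ gF B) {r : ℕ} (hocc : prof t B r ≠ 0)
    (hr4 : r + 4 ≤ t) : prof t B (r + 2) ≠ 0 := by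
  intro h0
  have hr1 : 1 ≤ r := by
    by_contra h
    have : r = 0 := by omega
    rw [this] at hocc
    exact hocc (prof_zero ht hv)
  by_cases h3 : prof t B (r + 3) = 0
  · obtain ⟨B', hB', hgt⟩ := slide_improve ht hm hv r 2 hr1 (by omega) (by omega) (by omega)
      hocc h0 (by rw [show r + 2 + 1 = r + 3 by omega]; exact h3)
    have := hmax _ hB'
    omega
  · have h1 : prof t B (r + 1) = 0 := prof_adj ht hv (by omega) hocc
    obtain ⟨B', hB', hgt⟩ := slide_improve ht hm hv r 1 hr1 (by omega) (by omega) (by omega)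
      hocc h1 (by rw [show r + 1 + 1 = r + 2 by omega]; exact h0)
    have := hmax _ hB'
    omega

lemma classify (ht : 2 ≤ t) (hm : 2 ≤ m) {B : Finset ℕ} (hv : ValidB t m B)
    (hmax : ∀ B', ValidB t m B' → gF B' ≤ gF B) (hne : B.Nonempty) :
    (∃ k, 1 ≤ k ∧ 2*k + 1 ≤ t ∧ B = confB t m k) ∨
    (∃ k, 2*(k+1) ≤ t ∧ B = confA t m k) := by
  have hHF := heights_full ht hm hv hmax
  set R : Finset ℕ := (Finset.range t).filter (fun r => prof t B r ≠ 0) with hR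
  have hRne : R.Nonempty := by
    obtain ⟨x, hx⟩ := hne
    refine ⟨x % t, ?_⟩
    rw [hR, Finset.mem_filter, Finset.mem_range]
    exact ⟨Nat.mod_lt x (by omega), occupied_of_mem ht hv hx⟩
  set ρ := R.max' hRne with hρ
  set σ := R.min' hRne with hσ
  have hmemρ : ρ ∈ R := R.max'_mem hRne
  have hmemσ : σ ∈ R := R.min'_mem hRne
  have hρoc : prof t B ρ ≠ 0 := (Finset.mem_filter.1 hmemρ).2
  have hσoc : prof t B σ ≠ 0 := (Finset.mem_filter.1 hmemσ).2
  have hρt : ρ < t := Finset.mem_range.1 (Finset.mem_filter.1 hmemρ).1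
  have hmaxfact : ∀ r, prof t B r ≠ 0 → r ≤ ρ := by
    intro r hr
    have hrt : r < t := by
      by_contra h
      exact hr (prof_big ht (by omega))
    exact R.le_max' r (Finset.mem_filter.2 ⟨Finset.mem_range.2 hrt, hr⟩)
  have hminfact : ∀ r, prof t B r ≠ 0 → σ ≤ r := by
    intro r hr
    have hrt : r < t := by
      by_contra h
      exact hr (prof_big ht (by omega))
    exact R.min'_le r (Finset.mem_filter.2 ⟨Finset.mem_range.2 hrt, hr⟩)
  have hσ1 : 1 ≤ σ := by
    by_contra h
    have : σ = 0 := by omega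
    rw [this] at hσoc
    exact hσoc (prof_zero ht hv)
  -- top is t-2 or t-1
  have htop : t - 2 ≤ ρ := by
    by_contra h
    rcases Nat.lt_or_ge (ρ + 4) (t + 1) with h4 | h4
    · have := climb ht hm hv hmax hρoc (by omega)
      have := hmaxfact _ this
      omega
    · -- ρ = t - 3
      have hρ3 : ρ + 3 = t := by omega
      have hρ1 : 1 ≤ ρ := by
        by_contra h'
        have : ρ = 0 := by omega
        rw [this] at hρoc
        exact hρoc (prof_zero ht hv)
      have h0 : prof t B (ρ + 1) = 0 := by
        by_contra h'
        have := hmaxfact _ h'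
        omega
      have h1 : prof t B (ρ + 2) = 0 := by
        by_contra h'
        have := hmaxfact _ h'
        omega
      obtain ⟨B', hB', hgt⟩ := slide_improve ht hm hv ρ 1 hρ1 (by omega) (by omega) (by omega)
        hρoc h0 (by rw [show ρ + 1 + 1 = ρ + 2 by omega]; exact h1)
      have := hmax _ hB'
      omega
  -- parity
  have hparity : ∀ r, prof t B r ≠ 0 → r % 2 = ρ % 2 := by
    have hclimbtop : ∀ d r, t ≤ r + d → prof t B r ≠ 0 →
        ∃ q, prof t B q ≠ 0 ∧ q % 2 = r % 2 ∧ t ≤ q + 3 := by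
      intro d
      induction d with
      | zero => intro r hd hocc; exact ⟨r, hocc, rfl, by omega⟩
      | succ d ih =>
        intro r hd hocc
        rcases Nat.lt_or_ge (r + 3) t with h3 | h3
        · have hocc2 := climb ht hm hv hmax hocc (by omega)
          obtain ⟨q, h1, h2, h3⟩ := ih (r + 2) (by omega) hocc2
          exact ⟨q, h1, by omega, h3⟩
        · exact ⟨r, hocc, rfl, by omega⟩
    intro r hocc
    obtain ⟨q, hq1, hq2, hq3⟩ := hclimbtop t r (by omega) hocc
    have hqρ : q ≤ ρ := hmaxfact _ hq1
    by_contra hpar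
    have hqρ2 : q % 2 ≠ ρ % 2 := by omega
    have hqne : q ≠ ρ := fun h => hqρ2 (by rw [h])
    have hadjq : prof t B (q + 1) = 0 := by
      rcases Nat.lt_or_ge (q + 1) t with h | h
      · exact prof_adj ht hv h hq1
      · exact prof_big ht (by omega)
    have : q + 1 = ρ := by omega
    rw [this] at hadjq
    exact hρoc hadjq
  -- filled
  have hfilled : ∀ j, σ + 2*j ≤ ρ → prof t B (σ + 2*j) ≠ 0 := by
    intro j
    induction j with
    | zero => intro _; simpa using hσoc
    | succ j ih =>
      intro hj
      have hprev := ih (by omega)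
      rcases Nat.lt_or_ge (σ + 2*j + 4) (t + 1) with h4 | h4
      · have := climb ht hm hv hmax hprev (by omega)
        rwa [show σ + 2*j + 2 = σ + 2*(j+1) by omega] at this
      · -- σ + 2j ≥ t - 3, and σ + 2(j+1) ≤ ρ ≤ t - 1, parity forces σ + 2(j+1) = ρ
        have hpar := hparity _ hprev
        have : σ + 2*(j+1) = ρ := by omega
        rw [this]
        exact hρoc
  rcases Nat.lt_or_ge ρ (t - 1) with hcase | hcase
  · -- ρ = t - 2 : B = confB k
    have hρe : ρ + 2 = t := by omega
    left
    set k := (ρ - σ)/2 + 1 with hk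
    have hparσ : σ % 2 = ρ % 2 := hparity _ hσoc
    have hσρ : σ ≤ ρ := hminfact _ hρoc
    refine ⟨k, by omega, by omega, ?_⟩
    ext x
    rw [mem_confB]
    constructor
    · intro hx
      have hrt : x % t < t := Nat.mod_lt x (by omega)
      have hdecomp : x = x % t + (x / t) * t := (Nat.mod_add_div' x t).symm
      set r := x % t with hr
      have hocc : prof t B r ≠ 0 := occupied_of_mem ht hv hx
      have hjlt : x / t < prof t B r := by
        rw [hdecomp] at hx
        exact (prof_chain ht hv hrt (x/t)).1 hx
      have hprof : prof t B r = m := by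
        rcases hHF r hrt with h | ⟨_, h⟩ | ⟨h, _⟩
        · exact absurd h hocc
        · exact h
        · exfalso
          have := hmaxfact _ hocc
          omega
      have hrσ := hminfact _ hocc
      have hrρ := hmaxfact _ hocc
      have hrpar := hparity _ hocc
      refine ⟨(t - r)/2 - 1, by omega, x / t, by omega, by omega⟩
    · rintro ⟨i, hi, j, hj, rfl⟩
      set r := t - 2*(i+1) with hr
      have hrocc : prof t B r ≠ 0 := by
        have := hfilled ((ρ - σ)/2 - i) (by omega)
        rwa [show σ + 2*((ρ - σ)/2 - i) = r by omega] at this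
      have hprof : prof t B r = m := by
        rcases hHF r (by omega) with h | ⟨_, h⟩ | ⟨h, _⟩
        · exact absurd h hrocc
        · exact h
        · exfalso
          have := hmaxfact _ hrocc
          omega
      exact (prof_chain ht hv (by omega) j).2 (by omega)
  · -- ρ = t - 1 : B = confA k
    have hρe : ρ + 1 = t := by omega
    right
    set k := (ρ - σ)/2 with hk
    have hparσ : σ % 2 = ρ % 2 := hparity _ hσoc
    have hσρ : σ ≤ ρ := hminfact _ hρoc
    have hρprof : prof t B ρ = m - 1 := by
      rcases hHF ρ hρt with h | ⟨h, _⟩ | ⟨_, h⟩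
      · exact absurd h hρoc
      · omega
      · exact h
    refine ⟨k, by omega, ?_⟩
    ext x
    rw [mem_confA]
    constructor
    · intro hx
      have hrt : x % t < t := Nat.mod_lt x (by omega)
      have hdecomp : x = x % t + (x / t) * t := (Nat.mod_add_div' x t).symm
      set r := x % t with hr
      have hocc : prof t B r ≠ 0 := occupied_of_mem ht hv hx
      have hjlt : x / t < prof t B r := by
        rw [hdecomp] at hx
        exact (prof_chain ht hv hrt (x/t)).1 hx
      have hrσ := hminfact _ hocc
      have hrρ := hmaxfact _ hocc
      have hrpar := hparity _ hocc
      rcases Nat.lt_or_ge r ρ with hrlt | hrge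
      · have hprof : prof t B r = m := by
          rcases hHF r hrt with h | ⟨_, h⟩ | ⟨h, _⟩
          · exact absurd h hocc
          · exact h
          · omega
        right
        refine ⟨(ρ - r)/2 - 1, by omega, x / t, by omega, by omega⟩
      · have hre : r = ρ := by omega
        left
        rw [hre] at hjlt
        exact ⟨x / t, by omega, by omega⟩
    · rintro (⟨j, hj, rfl⟩ | ⟨i, hi, j, hj, rfl⟩)
      · have : t - 1 = ρ := by omega
        rw [this]
        exact (prof_chain ht hv (by omega) j).2 (by omega)
      · set r := t - 1 - 2*(i+1) with hr
        have hrocc : prof t B r ≠ 0 := by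
          have := hfilled (k - (i+1)) (by omega)
          rwa [show σ + 2*(k - (i+1)) = r by omega] at this
        have hprof : prof t B r = m := by
          rcases hHF r (by omega) with h | ⟨_, h⟩ | ⟨h, _⟩
          · exact absurd h hrocc
          · exact h
          · omega
        exact (prof_chain ht hv (by omega) j).2 (by omega)

end Classify

section AtMostTwo

open Finset

variable {t m : ℕ}

lemma phi2_cancel {k1 k2 : ℕ} (h : Phi2 t m k1 = Phi2 t m k2) (hne : k1 ≠ k2) :
    (m : ℤ) * ((m : ℤ) + 2) * ((k1 : ℤ) + (k2 : ℤ)) = (m : ℤ) * ((t : ℤ) * ((m : ℤ) + 1) - 1) := by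
  have hsub : ((k1 : ℤ) - (k2 : ℤ)) ≠ 0 := by
    intro he
    exact hne (by exact_mod_cast sub_eq_zero.1 he)
  apply mul_left_cancel₀ hsub
  rw [Phi2, Phi2] at h
  linear_combination -h

lemma exists_pos_config (ht : 2 ≤ t) (hm : 2 ≤ m) :
    ∃ C : Finset ℕ, ValidB t m C ∧ 1 ≤ gF C := by
  have hm' : (2 : ℤ) ≤ (m : ℤ) := by exact_mod_cast hm
  rcases Nat.lt_or_ge t 3 with h3 | h3
  · have ht2 : t = 2 := by omega
    refine ⟨confA t m 0, validB_confA ht hm (by omega), ?_⟩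
    rw [gF_confA ht hm (by omega), Phi2, ht2]
    push_cast
    nlinarith
  · refine ⟨confB t m 1, validB_confB ht hm (by omega), ?_⟩
    rw [gF_confB ht (by omega), Phi2]
    have ht' : (3 : ℤ) ≤ (t : ℤ) := by exact_mod_cast h3
    have k1 : 3*((m:ℤ)+1) ≤ (t:ℤ)*((m:ℤ)+1) := by nlinarith
    push_cast
    nlinarith [k1]

lemma maximal_nonempty (ht : 2 ≤ t) (hm : 2 ≤ m) {B : Finset ℕ} (hv : ValidB t m B)
    (hmax : ∀ B', ValidB t m B' → gF B' ≤ gF B) : B.Nonempty := by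
  rcases Finset.eq_empty_or_nonempty B with rfl | h
  · exfalso
    obtain ⟨C, hC, hC1⟩ := exists_pos_config ht hm
    have := hmax _ hC
    have : gF (∅ : Finset ℕ) = 0 := by simp [gF]
    omega
  · exact h

lemma maximal_index (ht : 2 ≤ t) (hm : 2 ≤ m) {B : Finset ℕ} (hv : ValidB t m B)
    (hmax : ∀ B', ValidB t m B' → gF B' ≤ gF B) :
    ∃ κ, 1 ≤ κ ∧ gF B = Phi2 t m κ ∧
      ((2*κ < t ∧ B = confB t m κ) ∨ (2*κ = t ∧ B = confA t m (κ - 1))) := by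
  have hne := maximal_nonempty ht hm hv hmax
  rcases classify ht hm hv hmax hne with ⟨k, hk1, hk2, rfl⟩ | ⟨k, hk2, rfl⟩
  · exact ⟨k, hk1, gF_confB ht hk2, Or.inl ⟨by omega, rfl⟩⟩
  · have hkeq : 2*(k+1) = t := by
      by_contra hlt
      have hklt : 2*(k+1) + 1 ≤ t := by omega
      have hvB := validB_confB (t := t) (m := m) ht hm hklt
      have hle := hmax _ hvB
      rw [gF_confB ht hklt, gF_confA ht hm hk2] at hle
      have hm' : (2 : ℤ) ≤ (m : ℤ) := by exact_mod_cast hm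
      have hts : (2 * ((k : ℤ) + 1) : ℤ) + 1 ≤ (t : ℤ) := by exact_mod_cast hklt
      nlinarith
    refine ⟨k + 1, by omega, ?_, Or.inr ⟨by omega, by simp⟩⟩
    rw [gF_confA ht hm hk2]
    have : (2*((k : ℤ)+1) - (t : ℤ)) = 0 := by
      have : ((2*(k+1) : ℕ) : ℤ) = (t : ℤ) := by exact_mod_cast hkeq
      push_cast at this
      linarith
    rw [this]
    ring

lemma three_max_false (ht : 2 ≤ t) (hm : 2 ≤ m) {B1 B2 B3 : Finset ℕ}
    (hv1 : ValidB t m B1) (hmax1 : ∀ B', ValidB t m B' → gF B' ≤ gF B1)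
    (hv2 : ValidB t m B2) (hmax2 : ∀ B', ValidB t m B' → gF B' ≤ gF B2)
    (hv3 : ValidB t m B3) (hmax3 : ∀ B', ValidB t m B' → gF B' ≤ gF B3)
    (h12 : B1 ≠ B2) (h13 : B1 ≠ B3) (h23 : B2 ≠ B3) : False := by
  obtain ⟨κ1, hκ1, hg1, hc1⟩ := maximal_index ht hm hv1 hmax1
  obtain ⟨κ2, hκ2, hg2, hc2⟩ := maximal_index ht hm hv2 hmax2
  obtain ⟨κ3, hκ3, hg3, hc3⟩ := maximal_index ht hm hv3 hmax3
  have hdist : ∀ {κa κb : ℕ} {Ba Bb : Finset ℕ}, Ba ≠ Bb →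
      ((2*κa < t ∧ Ba = confB t m κa) ∨ (2*κa = t ∧ Ba = confA t m (κa - 1))) →
      ((2*κb < t ∧ Bb = confB t m κb) ∨ (2*κb = t ∧ Bb = confA t m (κb - 1))) →
      κa ≠ κb := by
    rintro κa κb Ba Bb hab (⟨ha, rfl⟩ | ⟨ha, rfl⟩) (⟨hb, rfl⟩ | ⟨hb, rfl⟩)
    · intro he; exact hab (by rw [he])
    · omega
    · omega
    · intro he; exact hab (by rw [he])
  have hne12 := hdist h12 hc1 hc2
  have hne13 := hdist h13 hc1 hc3
  have hne23 := hdist h23 hc2 hc3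
  have he12 : gF B1 = gF B2 := le_antisymm (hmax2 _ hv1) (hmax1 _ hv2)
  have he13 : gF B1 = gF B3 := le_antisymm (hmax3 _ hv1) (hmax1 _ hv3)
  have hp12 : Phi2 t m κ1 = Phi2 t m κ2 := by rw [← hg1, ← hg2, he12]
  have hp13 : Phi2 t m κ1 = Phi2 t m κ3 := by rw [← hg1, ← hg3, he13]
  have c12 := phi2_cancel hp12 hne12
  have c13 := phi2_cancel hp13 hne13
  have hC : (m : ℤ) * ((m : ℤ) + 2) ≠ 0 := by
    have hm' : (2 : ℤ) ≤ (m : ℤ) := by exact_mod_cast hm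
    nlinarith
  have : ((κ1 : ℤ) + (κ2 : ℤ)) = ((κ1 : ℤ) + (κ3 : ℤ)) :=
    mul_left_cancel₀ hC (by rw [c12, c13])
  have : κ2 = κ3 := by exact_mod_cast (by linarith : (κ2 : ℤ) = (κ3 : ℤ))
  exact hne23 this

end AtMostTwo

/-! ### Main theorem -/

open Finset

lemma gF_beta (l : Partn) : gF l.betaSet = 2 * (l.size : ℤ) := by
  have h := l.sum_betaSet
  have hc := l.card_betaSet
  rw [gF, hc]
  have hsum : (∑ x ∈ l.betaSet, (x : ℤ)) = ((∑ x ∈ l.betaSet, x : ℕ) : ℤ) := by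
    push_cast
    rfl
  rw [hsum]
  rcases Nat.eq_zero_or_pos l.len with h0 | hpos
  · have hB : l.betaSet = ∅ := Finset.card_eq_zero.1 (by rw [hc, h0])
    have hsz : l.size = 0 := by
      rw [hB, h0] at h
      simp at h
      omega
    rw [hB, h0, hsz]
    simp
  · have hcast : ((2 * ∑ x ∈ l.betaSet, x : ℕ) : ℤ) = 2 * ((l.size : ℤ)) + (l.len : ℤ) * ((l.len : ℤ) - 1) := by
      rw [h]
      push_cast [Nat.cast_sub hpos]
      ring
    have : ((∑ x ∈ l.betaSet, x : ℕ) : ℤ) = ((l.size : ℤ)) + (l.len : ℤ) * ((l.len : ℤ) - 1) / 2 := by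
      omega
    push_cast at hcast
    linarith

lemma valid_of_core {t m : ℕ} (ht : 2 ≤ t) (hm : 2 ≤ m) (l : Partn)
    (hcoret : l.IsCore t) (hcores : l.IsCore (m * t - 1)) (hd : l.DistinctParts) :
    ValidB t m l.betaSet := by
  have h4 : 4 ≤ m * t := by calc 4 = 2*2 := rfl
                                 _ ≤ m * t := Nat.mul_le_mul hm ht
  have hpos : ∀ x ∈ l.betaSet, 1 ≤ x := fun x hx => l.betaSet_pos hx
  have hcons : ∀ x ∈ l.betaSet, x + 1 ∉ l.betaSet := fun x hx => l.betaSet_noconsec hd hx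
  have hclT : ∀ x ∈ l.betaSet, t ≤ x → x - t ∈ l.betaSet :=
    (l.isCore_iff (by omega)).1 hcoret
  have hclS : ∀ x ∈ l.betaSet, m * t - 1 ≤ x → x - (m * t - 1) ∈ l.betaSet :=
    (l.isCore_iff (by omega)).1 hcores
  have hbd := bounded_of_closed ht hm l.betaSet hpos hcons hclT hclS
  exact ⟨fun x hx => ⟨hpos x hx, hbd x hx⟩, hcons, hclT⟩

lemma maximal_of_mem {t m : ℕ} (ht : 2 ≤ t) (hm : 2 ≤ m) (l : Partn)
    (hmax : ∀ mu : Partn, (mu.IsCore t ∧ mu.IsCore (m * t - 1) ∧ mu.DistinctParts) →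
      mu.size ≤ l.size) :
    ∀ B', ValidB t m B' → gF B' ≤ gF l.betaSet := by
  intro B' hv
  have h4 : 4 ≤ m * t := by calc 4 = 2*2 := rfl
                                 _ ≤ m * t := Nat.mul_le_mul hm ht
  set mu := Partn.ofBeta B' (fun x hx => (hv.1 x hx).1) hv.2.1 with hmu
  have hbeta : mu.betaSet = B' := Partn.ofBeta_betaSet _ _ _
  have hdist : mu.DistinctParts := Partn.ofBeta_distinct _ _ _
  have hcoret : mu.IsCore t := by
    apply (mu.isCore_iff (by omega)).2
    rw [hbeta]
    exact hv.2.2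
  have hcores : mu.IsCore (m * t - 1) := by
    apply (mu.isCore_iff (by omega)).2
    rw [hbeta]
    intro x hx hsx
    exfalso
    have := (hv.1 x hx).2
    omega
  have hle := hmax mu ⟨hcoret, hcores, hdist⟩
  have h1 : gF B' = 2 * (mu.size : ℤ) := by rw [← hbeta, gF_beta]
  have h2 := gF_beta l
  rw [h1, h2]
  have : (mu.size : ℤ) ≤ (l.size : ℤ) := by exact_mod_cast hle
  linarith

/-- There are at most two `(t, mt−1)`-core partitions with distinct parts of maximal size. -/
theorem num_largest_t_mt_sub_one (t m : ℕ) (ht : 2 ≤ t) (hm : 2 ≤ m) :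
    {lam : Partn | (lam.IsCore t ∧ lam.IsCore (m * t - 1) ∧ lam.DistinctParts) ∧
        ∀ mu : Partn, (mu.IsCore t ∧ mu.IsCore (m * t - 1) ∧ mu.DistinctParts) → mu.size ≤ lam.size}.ncard ≤ 2 := by
  set S := {lam : Partn | (lam.IsCore t ∧ lam.IsCore (m * t - 1) ∧ lam.DistinctParts) ∧
        ∀ mu : Partn, (mu.IsCore t ∧ mu.IsCore (m * t - 1) ∧ mu.DistinctParts) → mu.size ≤ lam.size} with hS
  rcases S.finite_or_infinite with hfin | hinf
  · by_contra hcon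
    push_neg at hcon
    obtain ⟨l1, hl1, l2, hl2, l3, hl3, h12, h13, h23⟩ := (Set.two_lt_ncard hfin).1 hcon
    have get : ∀ l, l ∈ S → ValidB t m l.betaSet ∧
        (∀ B', ValidB t m B' → gF B' ≤ gF l.betaSet) := by
      intro l hl
      rw [hS, Set.mem_setOf_eq] at hl
      exact ⟨valid_of_core ht hm l hl.1.1 hl.1.2.1 hl.1.2.2,
        maximal_of_mem ht hm l hl.2⟩
    obtain ⟨hv1, hm1⟩ := get _ hl1
    obtain ⟨hv2, hm2⟩ := get _ hl2
    obtain ⟨hv3, hm3⟩ := get _ hl3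
    have hne12 : l1.betaSet ≠ l2.betaSet := fun h => h12 (Partn.betaSet_injective h)
    have hne13 : l1.betaSet ≠ l3.betaSet := fun h => h13 (Partn.betaSet_injective h)
    have hne23 : l2.betaSet ≠ l3.betaSet := fun h => h23 (Partn.betaSet_injective h)
    exact three_max_false ht hm hv1 hm1 hv2 hm2 hv3 hm3 hne12 hne13 hne23
  · rw [hinf.ncard]
    omega
end

section
/- Let t ≥ 2 and m ≥ 1 be integers. The map sending a partition λ to the tuple (n₁(λ), n₂(λ), …, n_{t−1}(λ)) is a bijection from the set of (t, mt+1)-core partitions with distinct parts onto the set of tuples (x₁,…,x_{t−1}) of natural numbers with 0 ≤ x_i ≤ m for all 1 ≤ i ≤ t−1 and x_i·x_{i+1} = 0 for all 1 ≤ i ≤ t−2. -/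
namespace PartnAux

open Finset

/-- A downward-closed finite set of naturals is an initial segment. -/
lemma down_eq_range (K : Finset ℕ) (h : ∀ k ∈ K, ∀ k' ≤ k, k' ∈ K) :
    K = Finset.range K.card := by
  refine Finset.eq_of_subset_of_card_le ?_ (by simp)
  intro k hk
  rw [Finset.mem_range]
  have hsub : Finset.range (k + 1) ⊆ K := by
    intro k' hk'
    exact h k hk k' (by simpa [Nat.lt_succ_iff] using hk')
  have := Finset.card_le_card hsub
  simpa using this

lemma length_filter_eq_sum (L : List ℕ) (p : ℕ → Bool) :
    (L.filter p).length = ∑ i ∈ Finset.range L.length, if p (L.getD i 0) then 1 else 0 := by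
  induction L with
  | nil => simp
  | cons a T ih =>
    rw [List.filter_cons, List.length_cons, Finset.sum_range_succ']
    simp only [List.getD_cons_succ, List.getD_cons_zero]
    by_cases h : p a <;> simp [h, ih]

/-! ### Basic abbreviations -/

def pt (l : Partn) (k : ℕ) : ℕ := l.parts.getD k 0

def bv (l : Partn) (k : ℕ) : ℕ := pt l k + (l.parts.length - 1 - k)

lemma pt_pos (l : Partn) {k : ℕ} (h : k < l.parts.length) : 1 ≤ pt l k := by
  have : l.parts.getD k 0 = l.parts[k] := List.getD_eq_getElem _ _ h
  rw [pt, this]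
  exact l.pos _ (List.getElem_mem _)

lemma pt_anti (l : Partn) {k k' : ℕ} (h : k ≤ k') (h' : k' < l.parts.length) :
    pt l k' ≤ pt l k := by
  rcases eq_or_lt_of_le h with rfl | hlt
  · exact le_refl _
  · have hk : k < l.parts.length := lt_trans hlt h'
    have := l.sorted.rel_get_of_lt (a := ⟨k, hk⟩) (b := ⟨k', h'⟩) hlt
    rw [pt, pt, List.getD_eq_getElem _ _ hk, List.getD_eq_getElem _ _ h']
    exact this

lemma colLen_eq (l : Partn) (j : ℕ) :
    l.colLen j
      = ((Finset.range l.parts.length).filter (fun k => j ≤ pt l k)).card := by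
  rw [Partn.colLen, length_filter_eq_sum, Finset.card_filter]
  apply Finset.sum_congr rfl
  intro k _
  simp [pt]

lemma colLen_le (l : Partn) (j : ℕ) : l.colLen j ≤ l.parts.length := by
  rw [colLen_eq]
  calc _ ≤ (Finset.range l.parts.length).card := Finset.card_le_card (Finset.filter_subset _ _)
  _ = _ := by simp

lemma lt_colLen_iff (l : Partn) {k j : ℕ} :
    k < l.colLen j ↔ k < l.parts.length ∧ j ≤ pt l k := by
  rw [colLen_eq]
  have hd := down_eq_range ((Finset.range l.parts.length).filter (fun k => j ≤ pt l k)) ?_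
  · constructor
    · intro h
      have : k ∈ Finset.range (((Finset.range l.parts.length).filter (fun k => j ≤ pt l k)).card) :=
        Finset.mem_range.mpr h
      rw [← hd] at this
      simpa using this
    · intro ⟨h1, h2⟩
      have : k ∈ (Finset.range l.parts.length).filter (fun k => j ≤ pt l k) := by
        simp [h1, h2]
      rw [hd] at this
      simpa using this
  · intro a ha b hb
    simp only [Finset.mem_filter, Finset.mem_range] at ha ⊢
    exact ⟨lt_of_le_of_lt hb ha.1, le_trans ha.2 (pt_anti l hb ha.1)⟩

lemma colLen_anti (l : Partn) {j j' : ℕ} (h : j ≤ j') : l.colLen j' ≤ l.colLen j := by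
  rw [colLen_eq, colLen_eq]
  apply Finset.card_le_card
  intro k hk
  simp only [Finset.mem_filter] at hk ⊢
  exact ⟨hk.1, le_trans h hk.2⟩

end PartnAux

section
variable (l : Partn)

open Finset PartnAux

namespace PartnAux

lemma mem_betaSet {l : Partn} {x : ℕ} :
    x ∈ l.betaSet ↔ ∃ k, k < l.parts.length ∧ x = bv l k := by
  rw [Partn.betaSet]
  simp only [Finset.mem_image, Finset.mem_range]
  constructor
  · rintro ⟨k, hk, rfl⟩; exact ⟨k, hk, rfl⟩
  · rintro ⟨k, hk, rfl⟩; exact ⟨k, hk, rfl⟩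

lemma bv_lt_bv (l : Partn) {k k' : ℕ} (h : k < k') (h' : k' < l.parts.length) :
    bv l k' < bv l k := by
  have h1 := pt_anti l (le_of_lt h) h'
  have := h'
  unfold bv
  omega

lemma bv_pos (l : Partn) {k : ℕ} (h : k < l.parts.length) : 1 ≤ bv l k := by
  have := pt_pos l h
  unfold bv; omega

lemma one_le_of_mem_beta {l : Partn} {x : ℕ} (h : x ∈ l.betaSet) : 1 ≤ x := by
  obtain ⟨k, hk, rfl⟩ := mem_betaSet.mp h
  exact bv_pos l hk

lemma bv_lt_iff (l : Partn) {k k' : ℕ} (h : k < l.parts.length) (h' : k' < l.parts.length) :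
    bv l k < bv l k' ↔ k' < k := by
  constructor
  · intro hlt
    by_contra hc
    push_neg at hc
    rcases eq_or_lt_of_le hc with rfl | hlt2
    · omega
    · exact absurd (bv_lt_bv l hlt2 h') (by omega)
  · intro hlt; exact bv_lt_bv l hlt h

lemma bv_injOn (l : Partn) : Set.InjOn (bv l) (Finset.range l.parts.length) := by
  intro a ha b hb hab
  simp only [Finset.coe_range, Set.mem_Iio] at ha hb
  by_contra hne
  rcases lt_or_gt_of_ne hne with h | h
  · exact absurd hab (ne_of_gt (bv_lt_bv l h hb))
  · exact absurd hab (ne_of_lt (bv_lt_bv l h ha))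

lemma card_beta (l : Partn) : l.betaSet.card = l.parts.length := by
  have hb : l.betaSet = (Finset.range l.parts.length).image (bv l) := rfl
  rw [hb, Finset.card_image_of_injOn (bv_injOn l), Finset.card_range]

lemma rank_eq (l : Partn) {k : ℕ} (hk : k < l.parts.length) :
    (l.betaSet.filter (fun y => bv l k < y)).card = k := by
  have himg : l.betaSet.filter (fun y => bv l k < y) = (Finset.range k).image (bv l) := by
    ext y
    simp only [Finset.mem_filter, Finset.mem_image, Finset.mem_range, mem_betaSet]
    constructor
    · rintro ⟨⟨k', hk', rfl⟩, hlt⟩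
      exact ⟨k', (bv_lt_iff l hk hk').mp hlt, rfl⟩
    · rintro ⟨k', hk', rfl⟩
      have hk'l : k' < l.parts.length := lt_trans hk' hk
      exact ⟨⟨k', hk'l, rfl⟩, (bv_lt_iff l hk hk'l).mpr hk'⟩
  rw [himg, Finset.card_image_of_injOn, Finset.card_range]
  intro a ha b hb hab
  simp only [Finset.coe_range, Set.mem_Iio] at ha hb
  exact bv_injOn l (by simp; omega) (by simp; omega) hab

lemma beta_inj {l₁ l₂ : Partn} (h : l₁.betaSet = l₂.betaSet) : l₁ = l₂ := by
  have hlen : l₁.parts.length = l₂.parts.length := by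
    rw [← card_beta, ← card_beta, h]
  have hpt : ∀ k, k < l₁.parts.length → pt l₁ k = pt l₂ k := by
    intro k hk
    have hmem : bv l₁ k ∈ l₂.betaSet := by
      rw [← h]; exact mem_betaSet.mpr ⟨k, hk, rfl⟩
    obtain ⟨k', hk', heq⟩ := mem_betaSet.mp hmem
    have hr1 : (l₁.betaSet.filter (fun y => bv l₁ k < y)).card = k := rank_eq l₁ hk
    have hr2 : (l₂.betaSet.filter (fun y => bv l₂ k' < y)).card = k' := rank_eq l₂ hk'
    rw [h, heq] at hr1
    have hkk : k = k' := by omega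
    subst hkk
    have : bv l₁ k = bv l₂ k := heq
    unfold bv at this
    omega
  have hparts : l₁.parts = l₂.parts := by
    apply List.ext_getElem hlen
    intro k h1 h2
    have := hpt k h1
    rwa [pt, pt, List.getD_eq_getElem _ _ h1, List.getD_eq_getElem _ _ h2] at this
  cases l₁; cases l₂
  simp_all

end PartnAux
end

namespace PartnAux

open Finset

/-- `f l j` is, for `j ≥ 1`, the `j`-th smallest natural number not in the β-set. -/
def fA (l : Partn) (j : ℕ) : ℕ := l.parts.length - 1 + j - l.colLen j

lemma fA_not_mem (l : Partn) {j : ℕ} (hj : 1 ≤ j) : fA l j ∉ l.betaSet := by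
  intro hmem
  obtain ⟨k, hk, heq⟩ := mem_betaSet.mp hmem
  have hcl : l.colLen j ≤ l.parts.length := colLen_le l j
  unfold fA bv at heq
  by_cases hc : k < l.colLen j
  · have h2 : j ≤ pt l k := ((lt_colLen_iff l).mp hc).2
    omega
  · push_neg at hc
    have h2 : ¬ (j ≤ pt l k) := by
      intro hle
      exact absurd ((lt_colLen_iff l).mpr ⟨hk, hle⟩) (by omega)
    push_neg at h2
    omega

lemma fA_lt_bv (l : Partn) {i j : ℕ} (hi : i < l.parts.length) (hj : 1 ≤ j)
    (hjp : j ≤ pt l i) : fA l j < bv l i := by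
  have h1 : i < l.colLen j := (lt_colLen_iff l).mpr ⟨hi, hjp⟩
  have h2 : l.colLen j ≤ l.parts.length := colLen_le l j
  unfold fA bv
  omega

lemma fA_strictMonoOn (l : Partn) {j j' : ℕ} (hj : 1 ≤ j) (hjj : j < j') :
    fA l j < fA l j' := by
  have h1 : l.colLen j' ≤ l.colLen j := colLen_anti l (le_of_lt hjj)
  have h2 : l.colLen j ≤ l.parts.length := colLen_le l j
  unfold fA
  omega

lemma hook_add_fA (l : Partn) {i j : ℕ} (hi : i < l.parts.length) (hj : 1 ≤ j)
    (hjp : j ≤ pt l i) : l.hook i j + fA l j = bv l i := by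
  have h1 : i < l.colLen j := (lt_colLen_iff l).mpr ⟨hi, hjp⟩
  have h2 : l.colLen j ≤ l.parts.length := colLen_le l j
  rw [Partn.hook]
  have hgd : l.parts.getD i 0 = pt l i := rfl
  rw [hgd]
  unfold fA bv
  omega

lemma exists_j (l : Partn) {i y : ℕ} (hi : i < l.parts.length) (hy : y < bv l i)
    (hyn : y ∉ l.betaSet) : ∃ j, 1 ≤ j ∧ j ≤ pt l i ∧ fA l j = y := by
  classical
  set A : Finset ℕ := (Finset.range (bv l i)).filter (fun z => z ∉ l.betaSet) with hA
  have hbelow : (Finset.range (bv l i)).filter (fun z => z ∈ l.betaSet)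
      = (Finset.Ico (i+1) l.parts.length).image (bv l) := by
    ext z
    simp only [Finset.mem_filter, Finset.mem_range, Finset.mem_image, Finset.mem_Ico,
      mem_betaSet]
    constructor
    · rintro ⟨hlt, k, hk, rfl⟩
      exact ⟨k, ⟨by have := (bv_lt_iff l hk hi).mp hlt; omega, hk⟩, rfl⟩
    · rintro ⟨k, ⟨hik, hk⟩, rfl⟩
      exact ⟨(bv_lt_iff l hk hi).mpr (by omega), k, hk, rfl⟩
  have hcard_below : ((Finset.range (bv l i)).filter (fun z => z ∈ l.betaSet)).card
      = l.parts.length - (i+1) := by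
    rw [hbelow, Finset.card_image_of_injOn, Nat.card_Ico]
    intro a ha b hb hab
    simp only [Finset.coe_Ico, Set.mem_Ico] at ha hb
    exact bv_injOn l (by simp [ha.2]) (by simp [hb.2]) hab
  have hcardA : A.card = pt l i := by
    have hsum := Finset.card_filter_add_card_filter_not
      (s := Finset.range (bv l i)) (fun z => z ∈ l.betaSet)
    rw [Finset.card_range, hcard_below, ← hA] at hsum
    have hbvi : bv l i = pt l i + (l.parts.length - 1 - i) := rfl
    omega
  set F : Finset ℕ := (Finset.Icc 1 (pt l i)).image (fA l) with hF
  have hFA : F ⊆ A := by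
    intro z hz
    rw [hF] at hz
    obtain ⟨j, hj, rfl⟩ := Finset.mem_image.mp hz
    simp only [Finset.mem_Icc] at hj
    rw [hA, Finset.mem_filter, Finset.mem_range]
    exact ⟨fA_lt_bv l hi hj.1 hj.2, fA_not_mem l hj.1⟩
  have hcardF : F.card = pt l i := by
    rw [hF, Finset.card_image_of_injOn, Nat.card_Icc]
    · omega
    · intro a ha b hb hab
      simp only [Finset.coe_Icc, Set.mem_Icc] at ha hb
      by_contra hne
      rcases lt_or_gt_of_ne hne with h | h
      · exact absurd hab (ne_of_lt (fA_strictMonoOn l ha.1 h))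
      · exact absurd hab (ne_of_gt (fA_strictMonoOn l hb.1 h))
  have hEq : F = A := Finset.eq_of_subset_of_card_le hFA (by omega)
  have hyA : y ∈ A := by
    rw [hA, Finset.mem_filter, Finset.mem_range]
    exact ⟨hy, hyn⟩
  rw [← hEq, hF] at hyA
  obtain ⟨j, hj, hje⟩ := Finset.mem_image.mp hyA
  simp only [Finset.mem_Icc] at hj
  exact ⟨j, hj.1, hj.2, hje⟩

lemma isCore_iff (l : Partn) (t : ℕ) :
    l.IsCore t ↔ ∀ x ∈ l.betaSet, ∀ y, y < x → t ∣ (x - y) → y ∈ l.betaSet := by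
  constructor
  · intro hc x hx y hy hdvd
    obtain ⟨i, hi, rfl⟩ := mem_betaSet.mp hx
    by_contra hyn
    obtain ⟨j, hj1, hjp, hfj⟩ := exists_j l hi hy hyn
    have hk := hook_add_fA l hi hj1 hjp
    have hhe : l.hook i j = bv l i - y := by omega
    exact hc i j hi hj1 hjp (by rw [hhe]; exact hdvd)
  · intro hcl i j hi hj1 hjp hdvd
    have hfn := fA_not_mem l hj1
    have hfl := fA_lt_bv l hi hj1 hjp
    have heq := hook_add_fA l hi hj1 hjp
    apply hfn
    apply hcl (bv l i) (mem_betaSet.mpr ⟨i, hi, rfl⟩) (fA l j) hfl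
    have : bv l i - fA l j = l.hook i j := by omega
    rw [this]
    exact hdvd

lemma distinct_iff (l : Partn) :
    l.DistinctParts ↔ ∀ x, ¬(x ∈ l.betaSet ∧ x + 1 ∈ l.betaSet) := by
  constructor
  · intro hd x ⟨h1, h2⟩
    obtain ⟨k', hk', he1⟩ := mem_betaSet.mp h1
    obtain ⟨k, hk, he2⟩ := mem_betaSet.mp h2
    have hlt : bv l k' < bv l k := by omega
    have hkk : k < k' := (bv_lt_iff l hk' hk).mp hlt
    have hk1 : k + 1 < l.parts.length := by omega
    have hpp : pt l (k+1) < pt l k := by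
      have := hd.rel_get_of_lt (a := ⟨k, by omega⟩) (b := ⟨k+1, hk1⟩) (by simp)
      rw [pt, pt, List.getD_eq_getElem _ _ hk1, List.getD_eq_getElem _ _ (show k < _ by omega)]
      exact this
    have hle : bv l k' ≤ bv l (k+1) := by
      rcases eq_or_lt_of_le (show k + 1 ≤ k' by omega) with heq | hlt2
      · rw [heq]
      · exact le_of_lt (bv_lt_bv l hlt2 hk')
    unfold bv at *
    omega
  · intro h
    rw [Partn.DistinctParts, List.pairwise_iff_getElem]
    intro a b ha hb hab
    have hcons : ∀ k, k + 1 < l.parts.length → pt l (k+1) < pt l k := by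
      intro k hk1
      by_contra hc
      push_neg at hc
      have hge : pt l (k+1) ≤ pt l k := pt_anti l (by omega) hk1
      have heq : pt l (k+1) = pt l k := by omega
      apply h (bv l (k+1))
      constructor
      · exact mem_betaSet.mpr ⟨k+1, hk1, rfl⟩
      · have : bv l (k+1) + 1 = bv l k := by unfold bv; omega
        rw [this]
        exact mem_betaSet.mpr ⟨k, by omega, rfl⟩
    have key : pt l b < pt l a := by
      have h1 : pt l b ≤ pt l (a+1) := pt_anti l (by omega) hb
      have h2 : pt l (a+1) < pt l a := hcons a (by omega)
      omega
    rwa [pt, pt, List.getD_eq_getElem _ _ hb, List.getD_eq_getElem _ _ ha] at key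

end PartnAux

namespace PartnAux

open Finset

lemma mod_ne_zero {l : Partn} {t : ℕ} (ht : 1 ≤ t)
    (hclo : ∀ x ∈ l.betaSet, ∀ y, y < x → t ∣ (x - y) → y ∈ l.betaSet)
    {x : ℕ} (hx : x ∈ l.betaSet) : x % t ≠ 0 := by
  intro h0
  have hx1 : 1 ≤ x := one_le_of_mem_beta hx
  have hdvd : t ∣ x := Nat.dvd_of_mod_eq_zero h0
  have h0m : (0 : ℕ) ∈ l.betaSet := by
    apply hclo x hx 0 (by omega)
    simpa using hdvd
  have := one_le_of_mem_beta h0m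
  omega

lemma res_mem_iff {l : Partn} {t : ℕ} (ht : 2 ≤ t)
    (hclo : ∀ x ∈ l.betaSet, ∀ y, y < x → t ∣ (x - y) → y ∈ l.betaSet)
    {r : ℕ} (hr1 : 1 ≤ r) (hrt : r < t) (k : ℕ) :
    r + k * t ∈ l.betaSet ↔ k < l.nFn t r := by
  classical
  set K : Finset ℕ := (l.betaSet.filter (fun x => x % t = r)).image (fun x => x / t) with hK
  have hmod : ∀ k' : ℕ, (r + k' * t) % t = r := by
    intro k'
    rw [Nat.add_mul_mod_self_right, Nat.mod_eq_of_lt hrt]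
  have hdiv : ∀ k' : ℕ, (r + k' * t) / t = k' := by
    intro k'
    rw [Nat.add_mul_div_right _ _ (by omega : 0 < t), Nat.div_eq_of_lt hrt]
    omega
  have hKdown : ∀ a ∈ K, ∀ b ≤ a, b ∈ K := by
    intro a ha b hb
    rw [hK, Finset.mem_image] at ha
    obtain ⟨x, hx, hxd⟩ := ha
    rw [Finset.mem_filter] at hx
    have hmd := Nat.mod_add_div x t
    have hxe : x = r + (x / t) * t := by
      have hc : (x / t) * t = t * (x / t) := Nat.mul_comm _ _
      omega
    rcases eq_or_lt_of_le hb with rfl | hlt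
    · rw [hK, Finset.mem_image]
      exact ⟨x, by rw [Finset.mem_filter]; exact hx, hxd⟩
    · rw [← hxd] at hlt
      have hmul : (b + 1) * t ≤ (x / t) * t := Nat.mul_le_mul_right t hlt
      have hsm : (x / t - b) * t = (x / t) * t - b * t := Nat.sub_mul _ _ _
      have hbt : (b+1) * t = b * t + t := by ring
      have hy : r + b * t ∈ l.betaSet := by
        apply hclo x hx.1 (r + b * t) (by omega)
        refine ⟨x / t - b, ?_⟩
        have hc2 : t * (x / t - b) = (x / t - b) * t := Nat.mul_comm _ _
        omega
      rw [hK, Finset.mem_image]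
      refine ⟨r + b * t, ?_, hdiv b⟩
      rw [Finset.mem_filter]
      exact ⟨hy, hmod b⟩
  have hKcard : K.card = l.nFn t r := by
    rw [hK, Partn.nFn, Finset.card_image_of_injOn]
    intro x hx y hy hxy
    simp only [Finset.coe_filter, Set.mem_setOf_eq] at hx hy
    have h1 := Nat.mod_add_div x t
    have h2 := Nat.mod_add_div y t
    rw [hx.2] at h1
    rw [hy.2] at h2
    have hxy' : x / t = y / t := hxy
    have hmm : t * (x / t) = t * (y / t) := by rw [hxy']
    omega
  have hKrange := down_eq_range K hKdown
  constructor
  · intro h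
    have hmem : k ∈ K := by
      rw [hK, Finset.mem_image]
      refine ⟨r + k * t, ?_, hdiv k⟩
      rw [Finset.mem_filter]
      exact ⟨h, hmod k⟩
    rw [hKrange, Finset.mem_range, hKcard] at hmem
    exact hmem
  · intro h
    have hmem : k ∈ K := by
      rw [hKrange, Finset.mem_range, hKcard]
      exact h
    rw [hK, Finset.mem_image] at hmem
    obtain ⟨x, hx, hxd⟩ := hmem
    rw [Finset.mem_filter] at hx
    have hmd := Nat.mod_add_div x t
    have hxe : r + k * t = x := by
      have hc : t * (x / t) = (x / t) * t := Nat.mul_comm _ _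
      have hc2 : k * t = (x / t) * t := by rw [hxd]
      omega
    rw [hxe]
    exact hx.1

lemma mem_beta_struct {l : Partn} {t : ℕ} (ht : 2 ≤ t)
    (hclo : ∀ x ∈ l.betaSet, ∀ y, y < x → t ∣ (x - y) → y ∈ l.betaSet)
    (x : ℕ) :
    x ∈ l.betaSet ↔ (1 ≤ x % t ∧ x / t < l.nFn t (x % t)) := by
  have hmd := Nat.mod_add_div x t
  have hmlt : x % t < t := Nat.mod_lt _ (by omega)
  constructor
  · intro hx
    have h0 : x % t ≠ 0 := mod_ne_zero (by omega) hclo hx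
    refine ⟨by omega, ?_⟩
    rw [← res_mem_iff ht hclo (by omega) hmlt (x / t)]
    have : x % t + (x / t) * t = x := by
      have hc : t * (x / t) = (x / t) * t := Nat.mul_comm _ _
      omega
    rwa [this]
  · rintro ⟨h1, h2⟩
    have := (res_mem_iff ht hclo h1 hmlt (x / t)).mpr h2
    have heq : x % t + (x / t) * t = x := by
      have hc : t * (x / t) = (x / t) * t := Nat.mul_comm _ _
      omega
    rwa [heq] at this

lemma nFn_le {l : Partn} {t m : ℕ} (ht : 2 ≤ t) (hm : 1 ≤ m)
    (hclo : ∀ x ∈ l.betaSet, ∀ y, y < x → t ∣ (x - y) → y ∈ l.betaSet)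
    (hclom : ∀ x ∈ l.betaSet, ∀ y, y < x → (m * t + 1) ∣ (x - y) → y ∈ l.betaSet)
    (hd : ∀ x, ¬(x ∈ l.betaSet ∧ x + 1 ∈ l.betaSet))
    {r : ℕ} (hr1 : 1 ≤ r) (hrt : r < t) : l.nFn t r ≤ m := by
  by_contra hc
  push_neg at hc
  have hmem : r + m * t ∈ l.betaSet := by
    rw [res_mem_iff ht hclo hr1 hrt]
    omega
  have hmem0 : r ∈ l.betaSet := by
    have : r + 0 * t ∈ l.betaSet := by
      rw [res_mem_iff ht hclo hr1 hrt]
      omega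
    simpa using this
  have hstep : r - 1 ∈ l.betaSet := by
    apply hclom (r + m * t) hmem (r - 1) (by omega)
    refine ⟨1, by omega⟩
  rcases Nat.eq_or_lt_of_le hr1 with h1 | h1
  · have := one_le_of_mem_beta hstep
    omega
  · apply hd (r - 1)
    constructor
    · exact hstep
    · have : r - 1 + 1 = r := by omega
      rw [this]
      exact hmem0

lemma nFn_adj {l : Partn} {t : ℕ} (ht : 2 ≤ t)
    (hclo : ∀ x ∈ l.betaSet, ∀ y, y < x → t ∣ (x - y) → y ∈ l.betaSet)
    (hd : ∀ x, ¬(x ∈ l.betaSet ∧ x + 1 ∈ l.betaSet))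
    {r : ℕ} (hr1 : 1 ≤ r) (hrt : r + 1 < t) : l.nFn t r * l.nFn t (r + 1) = 0 := by
  rcases Nat.eq_zero_or_pos (l.nFn t r) with h | h
  · rw [h]; ring
  rcases Nat.eq_zero_or_pos (l.nFn t (r+1)) with h' | h'
  · rw [h']; ring
  exfalso
  apply hd r
  constructor
  · have : r + 0 * t ∈ l.betaSet := by
      rw [res_mem_iff ht hclo hr1 (by omega)]
      omega
    simpa using this
  · have : (r + 1) + 0 * t ∈ l.betaSet := by
      rw [res_mem_iff ht hclo (by omega) hrt]
      omega
    simpa using this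

end PartnAux

namespace PartnAux

open Finset

lemma sorted_lt_ge (A : List ℕ) (h : A.Pairwise (· < ·)) :
    ∀ d v, v + d < A.length → A.getD v 0 + d ≤ A.getD (v + d) 0 := by
  intro d
  induction d with
  | zero => intro v _; simp
  | succ d ih =>
    intro v hv
    have h1 : v + d < A.length := by omega
    have h2 := ih v h1
    have hstep : A.getD (v + d) 0 < A.getD (v + d + 1) 0 := by
      have := h.rel_get_of_lt (a := ⟨v + d, h1⟩) (b := ⟨v + d + 1, by omega⟩) (by simp)
      rwa [List.getD_eq_getElem _ _ h1, List.getD_eq_getElem _ _ (show v + d + 1 < _ by omega)]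
    show A.getD v 0 + (d + 1) ≤ A.getD (v + d + 1) 0
    omega

lemma sorted_lt_ge' (A : List ℕ) (h : A.Pairwise (· < ·)) {u v : ℕ} (huv : u ≤ v)
    (hv : v < A.length) : A.getD u 0 + (v - u) ≤ A.getD v 0 := by
  have := sorted_lt_ge A h (v - u) u (by omega)
  rwa [show u + (v - u) = v by omega] at this

/-- Build the partition whose β-set is a given finite set of positive integers. -/
def ofSet (B : Finset ℕ) (hB : ∀ x ∈ B, 1 ≤ x) : Partn where
  parts :=
    (List.range (Finset.sort B (· ≤ ·)).length).map
      (fun k => (Finset.sort B (· ≤ ·)).getD ((Finset.sort B (· ≤ ·)).length - 1 - k) 0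
        - ((Finset.sort B (· ≤ ·)).length - 1 - k))
  pos := by
    intro p hp
    rw [List.mem_map] at hp
    obtain ⟨k, hk, rfl⟩ := hp
    rw [List.mem_range] at hk
    set A := Finset.sort B (· ≤ ·) with hA
    have hidx : A.length - 1 - k < A.length := by omega
    have hge := sorted_lt_ge' A ((Finset.sortedLT_sort B).pairwise) (Nat.zero_le _) hidx
    have hmem : A.getD 0 0 ∈ A := by
      rw [List.getD_eq_getElem _ _ (show 0 < A.length by omega)]
      exact List.getElem_mem _
    have h0 : 1 ≤ A.getD 0 0 := hB _ ((Finset.mem_sort _).mp hmem)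
    omega
  sorted := by
    set A := Finset.sort B (· ≤ ·) with hA
    rw [List.pairwise_iff_getElem]
    intro i j hi hj hij
    simp only [List.length_map, List.length_range] at hi hj
    have hgi : ((List.range A.length).map
        (fun k => A.getD (A.length - 1 - k) 0 - (A.length - 1 - k)))[i]
        = A.getD (A.length - 1 - i) 0 - (A.length - 1 - i) := by
      simp [hi]
    have hgj : ((List.range A.length).map
        (fun k => A.getD (A.length - 1 - k) 0 - (A.length - 1 - k)))[j]
        = A.getD (A.length - 1 - j) 0 - (A.length - 1 - j) := by
      simp [hj]
    rw [hgi, hgj]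
    have huv : A.length - 1 - j ≤ A.length - 1 - i := by omega
    have hvn : A.length - 1 - i < A.length := by omega
    have hge := sorted_lt_ge' A ((Finset.sortedLT_sort B).pairwise) huv hvn
    omega

lemma ofSet_parts_len (B : Finset ℕ) (hB : ∀ x ∈ B, 1 ≤ x) :
    (ofSet B hB).parts.length = (Finset.sort B (· ≤ ·)).length := by
  simp [ofSet]

lemma ofSet_pt (B : Finset ℕ) (hB : ∀ x ∈ B, 1 ≤ x) {k : ℕ}
    (hk : k < (Finset.sort B (· ≤ ·)).length) :
    pt (ofSet B hB) k = (Finset.sort B (· ≤ ·)).getD ((Finset.sort B (· ≤ ·)).length - 1 - k) 0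
      - ((Finset.sort B (· ≤ ·)).length - 1 - k) := by
  rw [pt, List.getD_eq_getElem _ _ (by rw [ofSet_parts_len]; exact hk)]
  simp [ofSet, hk, List.getD_eq_getElem]

lemma ofSet_beta (B : Finset ℕ) (hB : ∀ x ∈ B, 1 ≤ x) : (ofSet B hB).betaSet = B := by
  classical
  set A := Finset.sort B (· ≤ ·) with hA
  have hlen : (ofSet B hB).parts.length = A.length := ofSet_parts_len B hB
  have hA1 : ∀ i, i < A.length → i + 1 ≤ A.getD i 0 := by
    intro i hi
    have hge := sorted_lt_ge' A ((Finset.sortedLT_sort B).pairwise) (Nat.zero_le i) hi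
    have hmem : A.getD 0 0 ∈ A := by
      rw [List.getD_eq_getElem _ _ (show 0 < A.length by omega)]
      exact List.getElem_mem _
    have h0 : 1 ≤ A.getD 0 0 := hB _ ((Finset.mem_sort _).mp hmem)
    omega
  ext x
  rw [mem_betaSet]
  constructor
  · rintro ⟨k, hk, rfl⟩
    rw [hlen] at hk
    have hidx : A.length - 1 - k < A.length := by omega
    have hbv : bv (ofSet B hB) k = A.getD (A.length - 1 - k) 0 := by
      rw [bv, ofSet_pt B hB hk, hlen]
      simp only [← hA]
      have := hA1 _ hidx
      omega
    rw [hbv]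
    have : A.getD (A.length - 1 - k) 0 ∈ A := by
      rw [List.getD_eq_getElem _ _ hidx]
      exact List.getElem_mem _
    exact (Finset.mem_sort _).mp this
  · intro hx
    have hxA : x ∈ A := (Finset.mem_sort _).mpr hx
    obtain ⟨u, hu, hux⟩ := List.mem_iff_getElem.mp hxA
    refine ⟨A.length - 1 - u, by omega, ?_⟩
    have hk : A.length - 1 - u < A.length := by omega
    have hidx : A.length - 1 - (A.length - 1 - u) = u := by omega
    rw [bv, ofSet_pt B hB hk, hlen]
    simp only [← hA]
    rw [hidx]
    have h1 := hA1 u hu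
    rw [List.getD_eq_getElem _ _ hu] at h1 ⊢
    omega

end PartnAux


open PartnAux

/-- `λ ↦ (n₁(λ), …, n_(t−1)(λ))` is a bijection from `(t, mt+1)`-core partitions with
distinct parts onto sequences `(x₁, …, x_(t−1))` with `xᵢ ≤ m` and `xᵢ·x_(i+1) = 0`. -/
theorem bijection_t_mt_add_one (t m : ℕ) (ht : 2 ≤ t) (hm : 1 ≤ m) :
    Set.BijOn (fun lam : Partn => fun i : Fin (t - 1) => Partn.nFn t ((i : ℕ) + 1) lam)
      {lam : Partn | (lam.IsCore t ∧ lam.IsCore (m * t + 1) ∧ lam.DistinctParts)}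
      {x : Fin (t - 1) → ℕ | (∀ i, x i ≤ m) ∧
          ∀ i j : Fin (t - 1), (j : ℕ) = (i : ℕ) + 1 → x i * x j = 0} := by
  classical
  refine ⟨?_, ?_, ?_⟩
  · -- MapsTo
    rintro lam ⟨hct, hcm, hd⟩
    have hclo := (isCore_iff lam t).mp hct
    have hclom := (isCore_iff lam (m * t + 1)).mp hcm
    have hnd := (distinct_iff lam).mp hd
    constructor
    · intro i
      exact nFn_le ht hm hclo hclom hnd (by omega) (by have := i.isLt; omega)
    · intro i j hij
      have hadj := nFn_adj ht hclo hnd (r := (i : ℕ) + 1) (by omega)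
        (by have := j.isLt; omega)
      simp only []
      rw [hij]
      exact hadj
  · -- InjOn
    rintro lam₁ ⟨hct₁, hcm₁, hd₁⟩ lam₂ ⟨hct₂, hcm₂, hd₂⟩ heq
    have hclo₁ := (isCore_iff lam₁ t).mp hct₁
    have hclo₂ := (isCore_iff lam₂ t).mp hct₂
    have hn : ∀ r, 1 ≤ r → r < t → Partn.nFn t r lam₁ = Partn.nFn t r lam₂ := by
      intro r h1 h2
      have := congrFun heq ⟨r - 1, by omega⟩
      simpa [show r - 1 + 1 = r by omega] using this
    apply beta_inj
    ext z
    rw [mem_beta_struct ht hclo₁ z, mem_beta_struct ht hclo₂ z]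
    have hmlt : z % t < t := Nat.mod_lt _ (by omega)
    constructor
    · rintro ⟨h1, h2⟩
      exact ⟨h1, by rwa [← hn (z % t) h1 hmlt]⟩
    · rintro ⟨h1, h2⟩
      exact ⟨h1, by rwa [hn (z % t) h1 hmlt]⟩
  · -- SurjOn
    intro x hx
    obtain ⟨hxle, hadj⟩ := hx
    set B : Finset ℕ := Finset.univ.biUnion
      (fun i : Fin (t - 1) => (Finset.range (x i)).image (fun k => ((i : ℕ) + 1) + k * t))
      with hB
    have hmemB : ∀ y, y ∈ B ↔ ∃ i : Fin (t - 1), ∃ k, k < x i ∧ y = ((i : ℕ) + 1) + k * t := by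
      intro y
      rw [hB, Finset.mem_biUnion]
      constructor
      · rintro ⟨i, -, hi⟩
        rw [Finset.mem_image] at hi
        obtain ⟨k, hk, rfl⟩ := hi
        exact ⟨i, k, Finset.mem_range.mp hk, rfl⟩
      · rintro ⟨i, k, hk, rfl⟩
        exact ⟨i, Finset.mem_univ _, Finset.mem_image.mpr ⟨k, Finset.mem_range.mpr hk, rfl⟩⟩
    have hBpos : ∀ y ∈ B, 1 ≤ y := by
      intro y hy
      obtain ⟨i, k, hk, rfl⟩ := (hmemB y).mp hy
      omega
    set lam := ofSet B hBpos with hlam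
    have hbeta : lam.betaSet = B := ofSet_beta B hBpos
    have hclo : ∀ a ∈ lam.betaSet, ∀ y, y < a → t ∣ (a - y) → y ∈ lam.betaSet := by
      rw [hbeta]
      intro a ha y hy hdvd
      obtain ⟨i, k, hk, rfl⟩ := (hmemB a).mp ha
      obtain ⟨c, hc⟩ := hdvd
      have hit : (i : ℕ) + 1 < t := by have := i.isLt; omega
      have hc1 : 1 ≤ c := by
        rcases Nat.eq_zero_or_pos c with rfl | h
        · simp at hc; omega
        · exact h
      have h3 : t * c = c * t := Nat.mul_comm _ _
      have hck : c ≤ k := by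
        by_contra hgt
        push_neg at hgt
        have h1 : (k + 1) * t ≤ c * t := Nat.mul_le_mul_right t hgt
        have h2 : (k + 1) * t = k * t + t := by ring
        omega
      rw [hmemB]
      refine ⟨i, k - c, by omega, ?_⟩
      have h4 : (k - c) * t = k * t - c * t := Nat.sub_mul _ _ _
      have h5 : c * t ≤ k * t := Nat.mul_le_mul_right t hck
      omega
    have hclom : ∀ a ∈ lam.betaSet, ∀ y, y < a → (m * t + 1) ∣ (a - y) → y ∈ lam.betaSet := by
      rw [hbeta]
      intro a ha y hy hdvd
      exfalso
      obtain ⟨i, k, hk, rfl⟩ := (hmemB a).mp ha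
      obtain ⟨c, hc⟩ := hdvd
      have hit : (i : ℕ) + 1 < t := by have := i.isLt; omega
      have hkm : k ≤ m - 1 := by have := hxle i; omega
      have h1 : k * t ≤ (m - 1) * t := Nat.mul_le_mul_right t hkm
      have h2 : (m - 1) * t = m * t - 1 * t := Nat.sub_mul _ _ _
      have h2' : 1 * t = t := one_mul t
      have h2'' : t ≤ m * t := by
        calc t = 1 * t := (one_mul t).symm
        _ ≤ m * t := Nat.mul_le_mul_right t hm
      have hc1 : 1 ≤ c := by
        rcases Nat.eq_zero_or_pos c with rfl | h
        · simp at hc; omega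
        · exact h
      have h6 : (m * t + 1) * 1 ≤ (m * t + 1) * c := Nat.mul_le_mul_left _ hc1
      have h7 : (m * t + 1) * 1 = m * t + 1 := by ring
      omega
    have hdst : ∀ y, ¬(y ∈ lam.betaSet ∧ y + 1 ∈ lam.betaSet) := by
      intro y ⟨h1, h2⟩
      rw [hbeta] at h1 h2
      obtain ⟨i, k, hk, hye⟩ := (hmemB y).mp h1
      obtain ⟨i', k', hk', hye'⟩ := (hmemB (y + 1)).mp h2
      have hit : (i : ℕ) + 1 < t := by have := i.isLt; omega
      have hit' : (i' : ℕ) + 1 < t := by have := i'.isLt; omega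
      have hmy : y % t = (i : ℕ) + 1 := by
        rw [hye, Nat.add_mul_mod_self_right, Nat.mod_eq_of_lt hit]
      have hmy' : (y + 1) % t = (i' : ℕ) + 1 := by
        rw [hye', Nat.add_mul_mod_self_right, Nat.mod_eq_of_lt hit']
      rcases Nat.lt_or_ge ((i : ℕ) + 2) t with hlt | hge
      · have hyp1 : y + 1 = ((i : ℕ) + 2) + k * t := by omega
        have hm2 : (y + 1) % t = (i : ℕ) + 2 := by
          rw [hyp1, Nat.add_mul_mod_self_right, Nat.mod_eq_of_lt hlt]
        have hii' : (i' : ℕ) = (i : ℕ) + 1 := by omega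
        have hprod := hadj i i' (by exact_mod_cast hii')
        rcases Nat.mul_eq_zero.mp hprod with h | h <;> omega
      · have hi1 : (i : ℕ) + 1 = t - 1 := by omega
        have hkt : (k + 1) * t = k * t + t := by ring
        have hyp1 : y + 1 = 0 + (k + 1) * t := by omega
        have hm0 : (y + 1) % t = 0 := by
          rw [hyp1, Nat.add_mul_mod_self_right]
          simp
        omega
    refine ⟨lam, ⟨(isCore_iff lam t).mpr hclo, (isCore_iff lam (m * t + 1)).mpr hclom,
      (distinct_iff lam).mpr hdst⟩, ?_⟩
    funext i
    show Partn.nFn t ((i : ℕ) + 1) lam = x i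
    rw [Partn.nFn, hbeta]
    have hit : (i : ℕ) + 1 < t := by have := i.isLt; omega
    have hfil : B.filter (fun z => z % t = (i : ℕ) + 1)
        = (Finset.range (x i)).image (fun k => ((i : ℕ) + 1) + k * t) := by
      ext z
      rw [Finset.mem_filter, Finset.mem_image]
      constructor
      · rintro ⟨hz, hmod⟩
        obtain ⟨i', k, hk, rfl⟩ := (hmemB z).mp hz
        have hit' : (i' : ℕ) + 1 < t := by have := i'.isLt; omega
        have hmod' : ((i' : ℕ) + 1 + k * t) % t = (i' : ℕ) + 1 := by
          rw [Nat.add_mul_mod_self_right, Nat.mod_eq_of_lt hit']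
        have hii : (i' : ℕ) = (i : ℕ) := by omega
        have hii2 : i' = i := Fin.ext hii
        subst hii2
        exact ⟨k, Finset.mem_range.mpr hk, rfl⟩
      · rintro ⟨k, hk, rfl⟩
        refine ⟨(hmemB _).mpr ⟨i, k, Finset.mem_range.mp hk, rfl⟩, ?_⟩
        rw [Nat.add_mul_mod_self_right, Nat.mod_eq_of_lt hit]
    rw [hfil, Finset.card_image_of_injOn, Finset.card_range]
    intro a _ b _ hab
    simp only [] at hab
    have h1 : a * t = b * t := by omega
    exact Nat.eq_of_mul_eq_mul_right (by omega) h1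
end
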